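/- arXiv:0901.4735 — 5 statements merged into one kernel-verified Lean document; each statement's English description precedes it below -/
import Mathlib

section
/- For all j, l ∈ {1,…,ℓ−1} and i ∈ Λ_k: δ_{j#i,+1}·δ_{l#(i^{j,+}),−1} − δ_{l#i,−1}·δ_{j#(i^{l,−}),+1} = δ_{j,l}·(j#i). In particular the operators E_j, F_l defined on W_k = ℂ^{Λ_k} by (E_j w)_i = δ_{j#i,+1} w_{i^{j,+}}, (F_l w)_i = δ_{l#i,−1} w_{i^{l,−}} satisfy [E_j, F_l] = δ_{j,l}·H_j where (H_j w)_i = (j#i)·w_i. -/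
/-- `j#s` for a subset `s` (equivalently, a strictly increasing tuple). -/
def sharpS (j : ℕ) (s : Finset ℕ) : ℤ :=
  (if j ∈ s then (1 : ℤ) else 0) - (if j + 1 ∈ s then 1 else 0)

/-- `s^{j,+}`: replace the entry `j` of `s` by `j+1`. -/
def upJ (j : ℕ) (s : Finset ℕ) : Finset ℕ := insert (j + 1) (s.erase j)

/-- `s^{j,-}`: replace the entry `j+1` of `s` by `j`. -/
def downJ (j : ℕ) (s : Finset ℕ) : Finset ℕ := insert j (s.erase (j + 1))

/-- The operator `E_j` on `W_k`: `(E_j w)_i = δ_{j#i,+1} w_{i^{j,+}}`. -/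
def Eop (j : ℕ) (w : Finset ℕ → ℂ) : Finset ℕ → ℂ :=
  fun s => if sharpS j s = 1 then w (upJ j s) else 0

/-- The operator `F_l` on `W_k`: `(F_l w)_i = δ_{l#i,-1} w_{i^{l,-}}`. -/
def Fop (l : ℕ) (w : Finset ℕ → ℂ) : Finset ℕ → ℂ :=
  fun s => if sharpS l s = -1 then w (downJ l s) else 0

lemma sharp_one (j : ℕ) (s : Finset ℕ) : sharpS j s = 1 ↔ (j ∈ s ∧ j+1 ∉ s) := by
  unfold sharpS; split_ifs <;> simp_all

lemma sharp_neg (j : ℕ) (s : Finset ℕ) : sharpS j s = -1 ↔ (j ∉ s ∧ j+1 ∈ s) := by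
  unfold sharpS; split_ifs <;> simp_all

lemma mem_upJ (x j : ℕ) (s : Finset ℕ) : x ∈ upJ j s ↔ (x = j+1 ∨ (x ∈ s ∧ x ≠ j)) := by
  simp [upJ, Finset.mem_insert, Finset.mem_erase]; tauto

lemma mem_downJ (x j : ℕ) (s : Finset ℕ) : x ∈ downJ j s ↔ (x = j ∨ (x ∈ s ∧ x ≠ j+1)) := by
  simp [downJ, Finset.mem_insert, Finset.mem_erase]; tauto

lemma down_up (j : ℕ) (s : Finset ℕ) (h1 : j ∈ s) (h2 : j+1 ∉ s) : downJ j (upJ j s) = s := by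
  ext x; simp [mem_downJ, mem_upJ]
  constructor
  · rintro (rfl | ⟨(rfl|⟨hx,_⟩), _⟩) <;> tauto
  · intro hx; by_cases hxj : x = j <;> [tauto; (right; refine ⟨Or.inr ⟨hx, hxj⟩, ?_⟩; rintro rfl; exact h2 hx)]

lemma up_down (j : ℕ) (s : Finset ℕ) (h1 : j ∉ s) (h2 : j+1 ∈ s) : upJ j (downJ j s) = s := by
  ext x; simp [mem_downJ, mem_upJ]
  constructor
  · rintro (rfl | ⟨(rfl|⟨hx,_⟩), _⟩) <;> tauto
  · intro hx; by_cases hxj : x = j+1 <;> [tauto; (right; refine ⟨Or.inr ⟨hx, hxj⟩, ?_⟩; rintro rfl; exact h1 hx)]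

lemma cond_iff (j l : ℕ) (hjl : j ≠ l) (s : Finset ℕ) :
    (sharpS j s = 1 ∧ sharpS l (upJ j s) = -1) ↔ (sharpS l s = -1 ∧ sharpS j (downJ l s) = 1) := by
  simp only [sharp_one, sharp_neg, mem_upJ, mem_downJ]
  by_cases a : j ∈ s <;> by_cases b : j+1 ∈ s <;> by_cases c : l ∈ s <;> by_cases d : l+1 ∈ s <;>
    simp [a, b, c, d] <;> omega

lemma comm_sets (j l : ℕ) (s : Finset ℕ) (h1 : l ≠ j) (h2 : l ≠ j+1) (h3 : l+1 ≠ j) :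
    downJ l (upJ j s) = upJ j (downJ l s) := by
  ext x; simp only [mem_downJ, mem_upJ]
  by_cases hx : x ∈ s <;> simp [hx] <;> omega

theorem delta_identity_and_commutator (ℓ k : ℕ) (hℓ : 2 ≤ ℓ) (hk1 : 1 ≤ k) (hkℓ : k ≤ ℓ)
    (j l : ℕ) (hj1 : 1 ≤ j) (hjℓ : j ≤ ℓ - 1) (hl1 : 1 ≤ l) (hlℓ : l ≤ ℓ - 1)
    (s : Finset ℕ) (hs : s ⊆ Finset.Icc 1 ℓ) (hcard : s.card = k) :
    ((if sharpS j s = 1 then (if sharpS l (upJ j s) = -1 then (1 : ℤ) else 0) else 0)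
      - (if sharpS l s = -1 then (if sharpS j (downJ l s) = 1 then 1 else 0) else 0)
      = (if j = l then 1 else 0) * sharpS j s) ∧
    (∀ w : Finset ℕ → ℂ,
      Eop j (Fop l w) s - Fop l (Eop j w) s
        = if j = l then ((sharpS j s : ℂ)) * w s else 0) := by
  by_cases hjl : j = l
  · subst hjl
    by_cases a : j ∈ s <;> by_cases b : j+1 ∈ s
    · have h1 : ¬ (sharpS j s = 1) := by simp [sharp_one, a, b]
      have h2 : ¬ (sharpS j s = -1) := by simp [sharp_neg, a, b]
      have h0 : sharpS j s = 0 := by simp [sharpS, a, b]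
      constructor
      · simp [h1, h2, h0]
      · intro w; simp [Eop, Fop, h1, h2, h0]
    · have h1 : sharpS j s = 1 := (sharp_one j s).2 ⟨a, b⟩
      have h2 : ¬ (sharpS j s = -1) := by simp [sharp_neg, a, b]
      have h3 : sharpS j (upJ j s) = -1 := by
        rw [sharp_neg]; simp [mem_upJ]
      have h4 : downJ j (upJ j s) = s := down_up j s a b
      constructor
      · simp [h1, h2, h3]
      · intro w; simp [Eop, Fop, h1, h2, h3, h4]
    · have h1 : ¬ (sharpS j s = 1) := by simp [sharp_one, a, b]
      have h2 : sharpS j s = -1 := (sharp_neg j s).2 ⟨a, b⟩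
      have h3 : sharpS j (downJ j s) = 1 := by
        rw [sharp_one]; simp [mem_downJ]
      have h4 : upJ j (downJ j s) = s := up_down j s a b
      constructor
      · simp [h1, h2, h3]
      · intro w; simp [Eop, Fop, h1, h2, h3, h4]
    · have h1 : ¬ (sharpS j s = 1) := by simp [sharp_one, a, b]
      have h2 : ¬ (sharpS j s = -1) := by simp [sharp_neg, a, b]
      have h0 : sharpS j s = 0 := by simp [sharpS, a, b]
      constructor
      · simp [h1, h2, h0]
      · intro w; simp [Eop, Fop, h1, h2, h0]
  · have hc := cond_iff j l hjl s
    constructor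
    · simp only [← ite_and, if_neg hjl, zero_mul]
      rw [if_congr hc rfl rfl]; ring
    · intro w
      simp only [Eop, Fop, if_neg hjl]
      by_cases hP : sharpS j s = 1 ∧ sharpS l (upJ j s) = -1
      · have hP' := hc.1 hP
        have hlj : l ∉ upJ j s ∧ l + 1 ∈ upJ j s := (sharp_neg _ _).1 hP.2
        have d2 : l ≠ j + 1 := by
          intro h; exact hlj.1 ((mem_upJ l j s).2 (Or.inl h))
        have d3 : l + 1 ≠ j := by
          rcases (mem_upJ (l+1) j s).1 hlj.2 with h | ⟨_, h⟩ <;> omega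
        have heq : downJ l (upJ j s) = upJ j (downJ l s) :=
          comm_sets j l s (Ne.symm hjl) d2 d3
        simp [hP.1, hP.2, hP'.1, hP'.2, heq]
      · have hQ : ¬ (sharpS l s = -1 ∧ sharpS j (downJ l s) = 1) := fun h => hP (hc.2 h)
        have e1 : (if sharpS j s = 1 then (if sharpS l (upJ j s) = -1 then w (downJ l (upJ j s)) else 0) else 0) = 0 := by
          by_cases h : sharpS j s = 1 <;> simp_all
        have e2 : (if sharpS l s = -1 then (if sharpS j (downJ l s) = 1 then w (upJ j (downJ l s)) else 0) else 0) = 0 := by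
          by_cases h : sharpS l s = -1 <;> simp_all
        rw [e1, e2, sub_zero]
end

section
/- Define the q-deformed wedge product of v ∈ W_h and w ∈ W_k (spaces indexed by strictly increasing tuples) by (v ∧_q w)_i = Σ_{p ∈ S^{(h)}_{h+k}} (−q^{−1})^{‖p‖} v_{i_{p(1)},…,i_{p(h)}} w_{i_{p(h+1)},…,i_{p(h+k)}}, where the sum is over minimal coset representatives of S_h × S_k in S_{h+k} and ‖p‖ is the inversion number. Then ∧_q is associative: (u ∧_q v) ∧_q w = u ∧_q (v ∧_q w). -/
/-- The inversion number `‖p‖` of a permutation of `Fin n`. -/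
def invNum (n : ℕ) (p : Equiv.Perm (Fin n)) : ℕ :=
  ((Finset.univ : Finset (Fin n × Fin n)).filter
    (fun x => x.1 < x.2 ∧ p x.2 < p x.1)).card

/-- The set `S^{(h)}_{h+k}` of minimal coset representatives: permutations increasing on the
first block `{1,…,h}` and on the second block `{h+1,…,h+k}`. -/
def shuffles (h k : ℕ) : Finset (Equiv.Perm (Fin (h + k))) :=
  Finset.univ.filter (fun p =>
    (∀ a b : Fin h, a < b → p (Fin.castAdd k a) < p (Fin.castAdd k b)) ∧
    (∀ a b : Fin k, a < b → p (Fin.natAdd h a) < p (Fin.natAdd h b)))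

/-- The q-deformed wedge product
`(v ∧_q w)_i = Σ_{p ∈ S^{(h)}_{h+k}} (-q⁻¹)^{‖p‖} v_{i_{p(1)},…,i_{p(h)}} w_{i_{p(h+1)},…,i_{p(h+k)}}`. -/
noncomputable def wedgeQ (q : ℝ) (h k : ℕ)
    (v : (Fin h → ℕ) → ℂ) (w : (Fin k → ℕ) → ℂ) : (Fin (h + k) → ℕ) → ℂ :=
  fun i => ∑ p ∈ shuffles h k,
    ((-q⁻¹ : ℂ) ^ invNum (h + k) p)
      * v (fun a => i (p (Fin.castAdd k a)))
      * w (fun a => i (p (Fin.natAdd h a)))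

namespace WedgeQAux

open Finset Equiv

/-- The inversion set of a permutation. -/
def invSet (n : ℕ) (p : Equiv.Perm (Fin n)) : Finset (Fin n × Fin n) :=
  (Finset.univ : Finset (Fin n × Fin n)).filter (fun x => x.1 < x.2 ∧ p x.2 < p x.1)

lemma invNum_eq (n : ℕ) (p : Equiv.Perm (Fin n)) : invNum n p = (invSet n p).card := rfl

lemma mem_invSet {n : ℕ} {p : Equiv.Perm (Fin n)} {x : Fin n × Fin n} :
    x ∈ invSet n p ↔ x.1 < x.2 ∧ p x.2 < p x.1 := by
  simp [invSet]

/-- Length is additive when multiplying a minimal coset representative (for an initial-segment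
parabolic) by an element of the parabolic subgroup. -/
lemma invNum_mul_initial {n : ℕ} (c : ℕ) (p t : Equiv.Perm (Fin n))
    (htB : ∀ a : Fin n, a.val < c → (t a).val < c)
    (htF : ∀ a : Fin n, ¬ a.val < c → t a = a)
    (hpB : ∀ a b : Fin n, a.val < c → b.val < c → a < b → p a < p b)
    (hpF : ∀ a b : Fin n, ¬ a.val < c → ¬ b.val < c → a < b → p a < p b) :
    invNum n (p * t) = invNum n p + invNum n t := by
  classical
  have htB' : ∀ a : Fin n, a.val < c → (t⁻¹ a).val < c := by
    intro a ha
    by_contra hge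
    have h1 : t (t⁻¹ a) = t⁻¹ a := htF _ hge
    rw [show t (t⁻¹ a) = a from t.apply_symm_apply a] at h1
    rw [← h1] at hge
    exact hge ha
  have hTsub : ∀ x : Fin n × Fin n, x ∈ invSet n t → x.1.val < c ∧ x.2.val < c := by
    intro x hx
    rw [mem_invSet] at hx
    obtain ⟨hlt, hinv⟩ := hx
    by_cases h2 : x.2.val < c
    · exact ⟨(Fin.lt_def.mp hlt).trans h2, h2⟩
    · exfalso
      rw [htF _ h2] at hinv
      by_cases h1 : x.1.val < c
      · have := htB _ h1
        rw [Fin.lt_def] at hinv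
        omega
      · rw [htF _ h1] at hinv
        exact absurd hlt (asymm hinv)
  have hPsub : ∀ x : Fin n × Fin n, x ∈ invSet n p → x.1.val < c ∧ ¬ x.2.val < c := by
    intro x hx
    rw [mem_invSet] at hx
    obtain ⟨hlt, hinv⟩ := hx
    by_cases h1 : x.1.val < c
    · refine ⟨h1, fun h2 => ?_⟩
      exact absurd hinv (asymm (hpB _ _ h1 h2 hlt))
    · exfalso
      have h2 : ¬ x.2.val < c := by
        have := Fin.lt_def.mp hlt; omega
      exact absurd hinv (asymm (hpF _ _ h1 h2 hlt))
  have hdisj : Disjoint (invSet n p) (invSet n t) := by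
    rw [Finset.disjoint_left]
    intro x hxp hxt
    exact (hPsub x hxp).2 (hTsub x hxt).2
  rw [invNum_eq, invNum_eq, invNum_eq, ← Finset.card_union_of_disjoint hdisj]
  refine Finset.card_bij' (fun x _ => if x.2.val < c then x else (t x.1, x.2))
    (fun y _ => if y.2.val < c then y else (t⁻¹ y.1, y.2)) ?_ ?_ ?_ ?_
  · intro x hx
    rw [mem_invSet] at hx
    obtain ⟨hlt, hinv⟩ := hx
    simp only [Equiv.Perm.mul_apply] at hinv
    by_cases h2 : x.2.val < c
    · have h1 : x.1.val < c := (Fin.lt_def.mp hlt).trans h2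
      rw [if_pos h2]
      refine Finset.mem_union_right _ (mem_invSet.mpr ⟨hlt, ?_⟩)
      by_contra hcon
      have hne : t x.1 ≠ t x.2 := fun he => (ne_of_lt hlt) (t.injective he)
      have hlt' : t x.1 < t x.2 := lt_of_le_of_ne (not_lt.mp hcon) hne
      exact absurd hinv (asymm (hpB _ _ (htB _ h1) (htB _ h2) hlt'))
    · have ht2 : t x.2 = x.2 := htF _ h2
      have h1 : x.1.val < c := by
        by_contra h1
        rw [ht2, htF _ h1] at hinv
        exact absurd hinv (asymm (hpF _ _ h1 h2 hlt))
      rw [if_neg h2]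
      refine Finset.mem_union_left _ (mem_invSet.mpr ⟨?_, ?_⟩)
      · rw [Fin.lt_def]
        have := htB _ h1
        simp only
        omega
      · rw [ht2] at hinv
        exact hinv
  · intro y hy
    rcases Finset.mem_union.mp hy with hyP | hyT
    · obtain ⟨hy1, hy2⟩ := hPsub y hyP
      rw [mem_invSet] at hyP
      obtain ⟨hlt, hinv⟩ := hyP
      rw [if_neg hy2, mem_invSet]
      constructor
      · rw [Fin.lt_def]
        have := htB' _ hy1
        simp only
        omega
      · simp only [Equiv.Perm.mul_apply, Equiv.Perm.coe_inv, Equiv.apply_symm_apply]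
        rw [htF _ hy2]
        exact hinv
    · obtain ⟨hy1, hy2⟩ := hTsub y hyT
      rw [mem_invSet] at hyT
      obtain ⟨hlt, hinv⟩ := hyT
      rw [if_pos hy2, mem_invSet]
      refine ⟨hlt, ?_⟩
      simp only [Equiv.Perm.mul_apply]
      exact hpB _ _ (htB _ hy2) (htB _ hy1) hinv
  · intro x hx
    by_cases h2 : x.2.val < c <;> simp [h2]
  · intro y hy
    by_cases h2 : y.2.val < c <;> simp [h2]

/-- Length is additive when multiplying a minimal coset representative (for a final-segment
parabolic) by an element of the parabolic subgroup. -/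
lemma invNum_mul_final {n : ℕ} (c : ℕ) (p t : Equiv.Perm (Fin n))
    (htB : ∀ a : Fin n, ¬ a.val < c → ¬ (t a).val < c)
    (htF : ∀ a : Fin n, a.val < c → t a = a)
    (hpB : ∀ a b : Fin n, a.val < c → b.val < c → a < b → p a < p b)
    (hpF : ∀ a b : Fin n, ¬ a.val < c → ¬ b.val < c → a < b → p a < p b) :
    invNum n (p * t) = invNum n p + invNum n t := by
  classical
  have htB' : ∀ a : Fin n, ¬ a.val < c → ¬ (t⁻¹ a).val < c := by
    intro a ha
    by_contra hlt
    have h1 : t (t⁻¹ a) = t⁻¹ a := htF _ hlt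
    rw [Equiv.Perm.coe_inv, Equiv.apply_symm_apply] at h1
    rw [h1] at ha
    exact ha hlt
  have hTsub : ∀ x : Fin n × Fin n, x ∈ invSet n t → ¬ x.1.val < c ∧ ¬ x.2.val < c := by
    intro x hx
    rw [mem_invSet] at hx
    obtain ⟨hlt, hinv⟩ := hx
    by_cases h1 : x.1.val < c
    · exfalso
      rw [htF _ h1] at hinv
      by_cases h2 : x.2.val < c
      · rw [htF _ h2] at hinv
        exact absurd hlt (asymm hinv)
      · have := htB _ h2
        rw [Fin.lt_def] at hinv
        omega
    · refine ⟨h1, ?_⟩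
      have := Fin.lt_def.mp hlt
      omega
  have hPsub : ∀ x : Fin n × Fin n, x ∈ invSet n p → x.1.val < c ∧ ¬ x.2.val < c := by
    intro x hx
    rw [mem_invSet] at hx
    obtain ⟨hlt, hinv⟩ := hx
    by_cases h1 : x.1.val < c
    · refine ⟨h1, fun h2 => ?_⟩
      exact absurd hinv (asymm (hpB _ _ h1 h2 hlt))
    · exfalso
      have h2 : ¬ x.2.val < c := by
        have := Fin.lt_def.mp hlt; omega
      exact absurd hinv (asymm (hpF _ _ h1 h2 hlt))
  have hdisj : Disjoint (invSet n p) (invSet n t) := by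
    rw [Finset.disjoint_left]
    intro x hxp hxt
    exact (hTsub x hxt).1 (hPsub x hxp).1
  rw [invNum_eq, invNum_eq, invNum_eq, ← Finset.card_union_of_disjoint hdisj]
  refine Finset.card_bij' (fun x _ => if x.1.val < c then (x.1, t x.2) else x)
    (fun y _ => if y.1.val < c then (y.1, t⁻¹ y.2) else y) ?_ ?_ ?_ ?_
  · intro x hx
    rw [mem_invSet] at hx
    obtain ⟨hlt, hinv⟩ := hx
    simp only [Equiv.Perm.mul_apply] at hinv
    by_cases h1 : x.1.val < c
    · have ht1 : t x.1 = x.1 := htF _ h1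
      have h2 : ¬ x.2.val < c := by
        intro h2
        rw [ht1, htF _ h2] at hinv
        exact absurd hinv (asymm (hpB _ _ h1 h2 hlt))
      rw [if_pos h1]
      refine Finset.mem_union_left _ (mem_invSet.mpr ⟨?_, ?_⟩)
      · rw [Fin.lt_def]
        have := htB _ h2
        simp only
        omega
      · rw [ht1] at hinv
        exact hinv
    · have h2 : ¬ x.2.val < c := by
        have := Fin.lt_def.mp hlt; omega
      rw [if_neg h1]
      refine Finset.mem_union_right _ (mem_invSet.mpr ⟨hlt, ?_⟩)
      by_contra hcon
      have hne : t x.1 ≠ t x.2 := fun he => (ne_of_lt hlt) (t.injective he)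
      have hlt' : t x.1 < t x.2 := lt_of_le_of_ne (not_lt.mp hcon) hne
      exact absurd hinv (asymm (hpF _ _ (htB _ h1) (htB _ h2) hlt'))
  · intro y hy
    rcases Finset.mem_union.mp hy with hyP | hyT
    · obtain ⟨hy1, hy2⟩ := hPsub y hyP
      rw [mem_invSet] at hyP
      obtain ⟨hlt, hinv⟩ := hyP
      rw [if_pos hy1, mem_invSet]
      constructor
      · rw [Fin.lt_def]
        have := htB' _ hy2
        simp only
        omega
      · simp only [Equiv.Perm.mul_apply, Equiv.Perm.coe_inv, Equiv.apply_symm_apply]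
        rw [htF _ hy1]
        exact hinv
    · obtain ⟨hy1, hy2⟩ := hTsub y hyT
      rw [mem_invSet] at hyT
      obtain ⟨hlt, hinv⟩ := hyT
      rw [if_neg hy1, mem_invSet]
      refine ⟨hlt, ?_⟩
      simp only [Equiv.Perm.mul_apply]
      exact hpF _ _ (htB _ hy2) (htB _ hy1) hinv
  · intro x hx
    by_cases h1 : x.1.val < c <;> simp [h1]
  · intro y hy
    by_cases h1 : y.1.val < c <;> simp [h1]

/-- Extension of a permutation of the first block by the identity. -/
def E1 (n m : ℕ) (s : Equiv.Perm (Fin n)) : Equiv.Perm (Fin (n + m)) :=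
  finSumFinEquiv.permCongr (Equiv.sumCongr s (Equiv.refl (Fin m)))

/-- Extension of a permutation of the second block by the identity. -/
def E2 (n m : ℕ) (s : Equiv.Perm (Fin m)) : Equiv.Perm (Fin (n + m)) :=
  finSumFinEquiv.permCongr (Equiv.sumCongr (Equiv.refl (Fin n)) s)

lemma E1_castAdd (n m : ℕ) (s : Equiv.Perm (Fin n)) (a : Fin n) :
    E1 n m s (Fin.castAdd m a) = Fin.castAdd m (s a) := by
  simp [E1, Equiv.permCongr_apply]

lemma E1_natAdd (n m : ℕ) (s : Equiv.Perm (Fin n)) (b : Fin m) :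
    E1 n m s (Fin.natAdd n b) = Fin.natAdd n b := by
  simp [E1, Equiv.permCongr_apply]

lemma E2_castAdd (n m : ℕ) (s : Equiv.Perm (Fin m)) (a : Fin n) :
    E2 n m s (Fin.castAdd m a) = Fin.castAdd m a := by
  simp [E2, Equiv.permCongr_apply]

lemma E2_natAdd (n m : ℕ) (s : Equiv.Perm (Fin m)) (b : Fin m) :
    E2 n m s (Fin.natAdd n b) = Fin.natAdd n (s b) := by
  simp [E2, Equiv.permCongr_apply]

lemma E1_apply_lt {n m : ℕ} (s : Equiv.Perm (Fin n)) {x : Fin (n + m)} (hx : x.val < n) :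
    E1 n m s x = Fin.castAdd m (s ⟨x.val, hx⟩) := by
  have hxe : x = Fin.castAdd m ⟨x.val, hx⟩ := Fin.ext rfl
  conv_lhs => rw [hxe]
  exact E1_castAdd n m s _

lemma E1_apply_ge {n m : ℕ} (s : Equiv.Perm (Fin n)) {x : Fin (n + m)} (hx : ¬ x.val < n) :
    E1 n m s x = x := by
  have hbd : x.val - n < m := by have := x.isLt; omega
  have hxe : x = Fin.natAdd n ⟨x.val - n, hbd⟩ := Fin.ext (by simp; omega)
  conv_lhs => rw [hxe]
  rw [E1_natAdd]
  exact hxe.symm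

lemma E2_apply_lt {n m : ℕ} (s : Equiv.Perm (Fin m)) {x : Fin (n + m)} (hx : x.val < n) :
    E2 n m s x = x := by
  have hxe : x = Fin.castAdd m ⟨x.val, hx⟩ := Fin.ext rfl
  conv_lhs => rw [hxe]
  rw [E2_castAdd]
  exact hxe.symm

lemma E2_apply_ge {n m : ℕ} (s : Equiv.Perm (Fin m)) {x : Fin (n + m)} (hx : ¬ x.val < n) :
    E2 n m s x = Fin.natAdd n (s ⟨x.val - n, by have := x.isLt; omega⟩) := by
  have hbd : x.val - n < m := by have := x.isLt; omega
  have hxe : x = Fin.natAdd n ⟨x.val - n, hbd⟩ := Fin.ext (by simp; omega)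
  conv_lhs => rw [hxe]
  exact E2_natAdd n m s _

lemma E1_mul (n m : ℕ) (s₁ s₂ : Equiv.Perm (Fin n)) :
    E1 n m (s₁ * s₂) = E1 n m s₁ * E1 n m s₂ := by
  apply Equiv.ext
  intro x
  rcases Nat.lt_or_ge x.val n with hx | hx
  · simp only [Equiv.Perm.mul_apply, E1_apply_lt _ hx]
    rw [E1_castAdd]
  · have hx' : ¬ x.val < n := not_lt.mpr hx
    simp only [Equiv.Perm.mul_apply, E1_apply_ge _ hx']

lemma E1_one (n m : ℕ) : E1 n m 1 = 1 := by
  apply Equiv.ext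
  intro x
  rcases Nat.lt_or_ge x.val n with hx | hx
  · rw [E1_apply_lt _ hx]
    simp only [Equiv.Perm.one_apply]
    exact Fin.ext rfl
  · rw [E1_apply_ge _ (not_lt.mpr hx)]
    rfl

lemma E2_mul (n m : ℕ) (s₁ s₂ : Equiv.Perm (Fin m)) :
    E2 n m (s₁ * s₂) = E2 n m s₁ * E2 n m s₂ := by
  apply Equiv.ext
  intro x
  rcases Nat.lt_or_ge x.val n with hx | hx
  · simp only [Equiv.Perm.mul_apply, E2_apply_lt _ hx]
  · have hx' : ¬ x.val < n := not_lt.mpr hx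
    simp only [Equiv.Perm.mul_apply, E2_apply_ge _ hx']
    rw [E2_natAdd]

lemma E2_one (n m : ℕ) : E2 n m 1 = 1 := by
  apply Equiv.ext
  intro x
  rcases Nat.lt_or_ge x.val n with hx | hx
  · rw [E2_apply_lt _ hx]
    rfl
  · rw [E2_apply_ge _ (not_lt.mpr hx)]
    simp only [Equiv.Perm.one_apply]
    exact Fin.ext (by simp; omega)

lemma invNum_E1 (n m : ℕ) (s : Equiv.Perm (Fin n)) :
    invNum (n + m) (E1 n m s) = invNum n s := by
  classical
  rw [invNum_eq, invNum_eq]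
  have hsub : ∀ x : Fin (n + m) × Fin (n + m), x ∈ invSet (n + m) (E1 n m s) →
      x.1.val < n ∧ x.2.val < n := by
    intro x hx
    rw [mem_invSet] at hx
    obtain ⟨hlt, hinv⟩ := hx
    by_cases h2 : x.2.val < n
    · exact ⟨(Fin.lt_def.mp hlt).trans h2, h2⟩
    · exfalso
      rw [E1_apply_ge s h2] at hinv
      by_cases h1 : x.1.val < n
      · rw [E1_apply_lt s h1] at hinv
        have hv := (s ⟨x.1.val, h1⟩).isLt
        rw [Fin.lt_def] at hinv
        simp only [Fin.coe_castAdd] at hinv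
        omega
      · rw [E1_apply_ge s h1] at hinv
        exact absurd hlt (asymm hinv)
  have himg : invSet (n + m) (E1 n m s) =
      (invSet n s).image (fun y => (Fin.castAdd m y.1, Fin.castAdd m y.2)) := by
    ext x
    simp only [Finset.mem_image]
    constructor
    · intro hx
      obtain ⟨h1, h2⟩ := hsub x hx
      rw [mem_invSet] at hx
      obtain ⟨hlt, hinv⟩ := hx
      refine ⟨(⟨x.1.val, h1⟩, ⟨x.2.val, h2⟩), ?_, ?_⟩
      · rw [mem_invSet]
        constructor
        · rw [Fin.lt_def]
          exact Fin.lt_def.mp hlt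
        · rw [E1_apply_lt s h1, E1_apply_lt s h2, Fin.lt_def] at hinv
          simp only [Fin.coe_castAdd] at hinv
          rw [Fin.lt_def]
          exact hinv
      · exact Prod.ext (Fin.ext rfl) (Fin.ext rfl)
    · rintro ⟨y, hy, rfl⟩
      rw [mem_invSet] at hy ⊢
      obtain ⟨hylt, hyinv⟩ := hy
      constructor
      · rw [Fin.lt_def]
        simpa using Fin.lt_def.mp hylt
      · simp only [E1_castAdd]
        rw [Fin.lt_def]
        simpa using Fin.lt_def.mp hyinv
  rw [himg, Finset.card_image_of_injective]
  intro a b hab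
  have h1 := congrArg (fun z => (Fin.val z.1, Fin.val z.2)) hab
  simp only [Fin.coe_castAdd] at h1
  exact Prod.ext (Fin.ext (congrArg Prod.fst h1)) (Fin.ext (congrArg Prod.snd h1))

lemma invNum_E2 (n m : ℕ) (s : Equiv.Perm (Fin m)) :
    invNum (n + m) (E2 n m s) = invNum m s := by
  classical
  rw [invNum_eq, invNum_eq]
  have hsub : ∀ x : Fin (n + m) × Fin (n + m), x ∈ invSet (n + m) (E2 n m s) →
      ¬ x.1.val < n ∧ ¬ x.2.val < n := by
    intro x hx
    rw [mem_invSet] at hx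
    obtain ⟨hlt, hinv⟩ := hx
    by_cases h1 : x.1.val < n
    · exfalso
      rw [E2_apply_lt s h1] at hinv
      by_cases h2 : x.2.val < n
      · rw [E2_apply_lt s h2] at hinv
        exact absurd hlt (asymm hinv)
      · rw [E2_apply_ge s h2] at hinv
        rw [Fin.lt_def] at hinv
        simp only [Fin.coe_natAdd] at hinv
        omega
    · refine ⟨h1, ?_⟩
      have := Fin.lt_def.mp hlt
      omega
  have himg : invSet (n + m) (E2 n m s) =
      (invSet m s).image (fun y => (Fin.natAdd n y.1, Fin.natAdd n y.2)) := by
    ext x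
    simp only [Finset.mem_image]
    constructor
    · intro hx
      obtain ⟨h1, h2⟩ := hsub x hx
      rw [mem_invSet] at hx
      obtain ⟨hlt, hinv⟩ := hx
      have hb1 : x.1.val - n < m := by have := x.1.isLt; omega
      have hb2 : x.2.val - n < m := by have := x.2.isLt; omega
      refine ⟨(⟨x.1.val - n, hb1⟩, ⟨x.2.val - n, hb2⟩), ?_, ?_⟩
      · rw [mem_invSet]
        constructor
        · rw [Fin.lt_def]
          have := Fin.lt_def.mp hlt
          dsimp only
          omega
        · rw [E2_apply_ge s h1, E2_apply_ge s h2, Fin.lt_def] at hinv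
          simp only [Fin.coe_natAdd] at hinv
          rw [Fin.lt_def]
          dsimp only
          exact Nat.lt_of_add_lt_add_left hinv
      · refine Prod.ext (Fin.ext ?_) (Fin.ext ?_) <;> simp <;> omega
    · rintro ⟨y, hy, rfl⟩
      rw [mem_invSet] at hy ⊢
      obtain ⟨hylt, hyinv⟩ := hy
      constructor
      · rw [Fin.lt_def]
        simp only [Fin.coe_natAdd]
        have := Fin.lt_def.mp hylt
        omega
      · simp only [E2_natAdd]
        rw [Fin.lt_def]
        simp only [Fin.coe_natAdd]
        have := Fin.lt_def.mp hyinv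
        omega
  rw [himg, Finset.card_image_of_injective]
  intro a b hab
  have h1 := congrArg (fun z => (Fin.val z.1, Fin.val z.2)) hab
  simp only [Fin.coe_natAdd] at h1
  have h2 : n + a.1.val = n + b.1.val := congrArg Prod.fst h1
  have h3 : n + a.2.val = n + b.2.val := congrArg Prod.snd h1
  exact Prod.ext (Fin.ext (by omega)) (Fin.ext (by omega))

lemma mem_shuffles {h k : ℕ} {p : Equiv.Perm (Fin (h + k))} :
    p ∈ shuffles h k ↔
      (∀ a b : Fin h, a < b → p (Fin.castAdd k a) < p (Fin.castAdd k b)) ∧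
      (∀ a b : Fin k, a < b → p (Fin.natAdd h a) < p (Fin.natAdd h b)) := by
  simp [shuffles]

lemma shuffles_lt₁ {n m : ℕ} {p : Equiv.Perm (Fin (n + m))} (hp : p ∈ shuffles n m)
    {a b : Fin (n + m)} (ha : a.val < n) (hb : b.val < n) (hab : a < b) : p a < p b := by
  have h1 := (mem_shuffles.mp hp).1 ⟨a.val, ha⟩ ⟨b.val, hb⟩
    (by rw [Fin.lt_def]; exact Fin.lt_def.mp hab)
  have e1 : Fin.castAdd m (⟨a.val, ha⟩ : Fin n) = a := Fin.ext rfl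
  have e2 : Fin.castAdd m (⟨b.val, hb⟩ : Fin n) = b := Fin.ext rfl
  rwa [e1, e2] at h1

lemma shuffles_lt₂ {n m : ℕ} {p : Equiv.Perm (Fin (n + m))} (hp : p ∈ shuffles n m)
    {a b : Fin (n + m)} (ha : ¬ a.val < n) (hb : ¬ b.val < n) (hab : a < b) : p a < p b := by
  have hba : a.val - n < m := by have := a.isLt; omega
  have hbb : b.val - n < m := by have := b.isLt; omega
  have h1 := (mem_shuffles.mp hp).2 ⟨a.val - n, hba⟩ ⟨b.val - n, hbb⟩
    (by rw [Fin.lt_def]; have := Fin.lt_def.mp hab; simp only; omega)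
  have e1 : Fin.natAdd n (⟨a.val - n, hba⟩ : Fin m) = a := Fin.ext (by simp; omega)
  have e2 : Fin.natAdd n (⟨b.val - n, hbb⟩ : Fin m) = b := Fin.ext (by simp; omega)
  rwa [e1, e2] at h1

/-- Permutations of `Fin (h+k+m)` increasing on each of the three blocks. -/
def tri (h k m : ℕ) : Finset (Equiv.Perm (Fin (h + k + m))) :=
  Finset.univ.filter (fun r =>
    (∀ a b : Fin h, a < b →
      r (Fin.castAdd m (Fin.castAdd k a)) < r (Fin.castAdd m (Fin.castAdd k b))) ∧
    (∀ a b : Fin k, a < b →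
      r (Fin.castAdd m (Fin.natAdd h a)) < r (Fin.castAdd m (Fin.natAdd h b))) ∧
    (∀ a b : Fin m, a < b →
      r (Fin.natAdd (h + k) a) < r (Fin.natAdd (h + k) b)))

lemma mem_tri {h k m : ℕ} {r : Equiv.Perm (Fin (h + k + m))} :
    r ∈ tri h k m ↔
      (∀ a b : Fin h, a < b →
        r (Fin.castAdd m (Fin.castAdd k a)) < r (Fin.castAdd m (Fin.castAdd k b))) ∧
      (∀ a b : Fin k, a < b →
        r (Fin.castAdd m (Fin.natAdd h a)) < r (Fin.castAdd m (Fin.natAdd h b))) ∧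
      (∀ a b : Fin m, a < b →
        r (Fin.natAdd (h + k) a) < r (Fin.natAdd (h + k) b)) := by
  simp [tri]

/-- Permutations of `Fin (h+(k+m))` increasing on each of the three blocks. -/
def tri' (h k m : ℕ) : Finset (Equiv.Perm (Fin (h + (k + m)))) :=
  Finset.univ.filter (fun r =>
    (∀ a b : Fin h, a < b →
      r (Fin.castAdd (k + m) a) < r (Fin.castAdd (k + m) b)) ∧
    (∀ a b : Fin k, a < b →
      r (Fin.natAdd h (Fin.castAdd m a)) < r (Fin.natAdd h (Fin.castAdd m b))) ∧
    (∀ a b : Fin m, a < b →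
      r (Fin.natAdd h (Fin.natAdd k a)) < r (Fin.natAdd h (Fin.natAdd k b))))

lemma mem_tri' {h k m : ℕ} {r : Equiv.Perm (Fin (h + (k + m)))} :
    r ∈ tri' h k m ↔
      (∀ a b : Fin h, a < b →
        r (Fin.castAdd (k + m) a) < r (Fin.castAdd (k + m) b)) ∧
      (∀ a b : Fin k, a < b →
        r (Fin.natAdd h (Fin.castAdd m a)) < r (Fin.natAdd h (Fin.castAdd m b))) ∧
      (∀ a b : Fin m, a < b →
        r (Fin.natAdd h (Fin.natAdd k a)) < r (Fin.natAdd h (Fin.natAdd k b))) := by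
  simp [tri']

lemma mul_mem_tri {h k m : ℕ} {p : Equiv.Perm (Fin (h + k + m))} {s : Equiv.Perm (Fin (h + k))}
    (hp : p ∈ shuffles (h + k) m) (hs : s ∈ shuffles h k) :
    p * E1 (h + k) m s ∈ tri h k m := by
  obtain ⟨hp1, hp2⟩ := mem_shuffles.mp hp
  obtain ⟨hs1, hs2⟩ := mem_shuffles.mp hs
  rw [mem_tri]
  refine ⟨?_, ?_, ?_⟩
  · intro a b hab
    simp only [Equiv.Perm.mul_apply, E1_castAdd]
    exact hp1 _ _ (hs1 a b hab)
  · intro a b hab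
    simp only [Equiv.Perm.mul_apply, E1_castAdd]
    exact hp1 _ _ (hs2 a b hab)
  · intro a b hab
    simp only [Equiv.Perm.mul_apply, E1_natAdd]
    exact hp2 a b hab

lemma mul_mem_tri' {h k m : ℕ} {p : Equiv.Perm (Fin (h + (k + m)))}
    {s : Equiv.Perm (Fin (k + m))}
    (hp : p ∈ shuffles h (k + m)) (hs : s ∈ shuffles k m) :
    p * E2 h (k + m) s ∈ tri' h k m := by
  obtain ⟨hp1, hp2⟩ := mem_shuffles.mp hp
  obtain ⟨hs1, hs2⟩ := mem_shuffles.mp hs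
  rw [mem_tri']
  refine ⟨?_, ?_, ?_⟩
  · intro a b hab
    simp only [Equiv.Perm.mul_apply, E2_castAdd]
    exact hp1 a b hab
  · intro a b hab
    simp only [Equiv.Perm.mul_apply, E2_natAdd]
    exact hp2 _ _ (hs1 a b hab)
  · intro a b hab
    simp only [Equiv.Perm.mul_apply, E2_natAdd]
    exact hp2 _ _ (hs2 a b hab)

lemma left_fact {h k m : ℕ} {r : Equiv.Perm (Fin (h + k + m))} (hr : r ∈ tri h k m) :
    r * E1 (h + k) m (Tuple.sort (fun a : Fin (h + k) => r (Fin.castAdd m a)))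
      ∈ shuffles (h + k) m ∧
    (Tuple.sort (fun a : Fin (h + k) => r (Fin.castAdd m a)))⁻¹ ∈ shuffles h k := by
  classical
  set f : Fin (h + k) → Fin (h + k + m) := fun a => r (Fin.castAdd m a) with hf
  set σ := Tuple.sort f with hσ
  have hfinj : Function.Injective f := fun a b hab =>
    Fin.castAdd_injective _ _ (r.injective hab)
  have hinj : Function.Injective (f ∘ σ) := hfinj.comp σ.injective
  have hg : StrictMono (f ∘ σ) := (Tuple.monotone_sort f).strictMono_of_injective hinj
  obtain ⟨hr1, hr2, hr3⟩ := mem_tri.mp hr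
  have key : ∀ x : Fin (h + k), f x = (f ∘ σ) (σ⁻¹ x) := by
    intro x
    simp [Function.comp]
  constructor
  · rw [mem_shuffles]
    constructor
    · intro a b hab
      have ea : (r * E1 (h + k) m σ) (Fin.castAdd m a) = (f ∘ σ) a := by
        simp only [Equiv.Perm.mul_apply, E1_castAdd, Function.comp, hf]
      have eb : (r * E1 (h + k) m σ) (Fin.castAdd m b) = (f ∘ σ) b := by
        simp only [Equiv.Perm.mul_apply, E1_castAdd, Function.comp, hf]
      rw [ea, eb]
      exact hg hab
    · intro a b hab
      have ea : (r * E1 (h + k) m σ) (Fin.natAdd (h + k) a) = r (Fin.natAdd (h + k) a) := by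
        simp only [Equiv.Perm.mul_apply, E1_natAdd]
      have eb : (r * E1 (h + k) m σ) (Fin.natAdd (h + k) b) = r (Fin.natAdd (h + k) b) := by
        simp only [Equiv.Perm.mul_apply, E1_natAdd]
      rw [ea, eb]
      exact hr3 a b hab
  · rw [mem_shuffles]
    constructor
    · intro a b hab
      have hfab : f (Fin.castAdd k a) < f (Fin.castAdd k b) := hr1 a b hab
      rw [key (Fin.castAdd k a), key (Fin.castAdd k b)] at hfab
      exact hg.lt_iff_lt.mp hfab
    · intro a b hab
      have hfab : f (Fin.natAdd h a) < f (Fin.natAdd h b) := hr2 a b hab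
      rw [key (Fin.natAdd h a), key (Fin.natAdd h b)] at hfab
      exact hg.lt_iff_lt.mp hfab

lemma right_fact {h k m : ℕ} {r : Equiv.Perm (Fin (h + (k + m)))} (hr : r ∈ tri' h k m) :
    r * E2 h (k + m) (Tuple.sort (fun b : Fin (k + m) => r (Fin.natAdd h b)))
      ∈ shuffles h (k + m) ∧
    (Tuple.sort (fun b : Fin (k + m) => r (Fin.natAdd h b)))⁻¹ ∈ shuffles k m := by
  classical
  set g : Fin (k + m) → Fin (h + (k + m)) := fun b => r (Fin.natAdd h b) with hgdef
  set σ := Tuple.sort g with hσ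
  have hginj : Function.Injective g := by
    intro a b hab
    have := r.injective hab
    have hv := congrArg Fin.val this
    simp only [Fin.coe_natAdd] at hv
    exact Fin.ext (by omega)
  have hinj : Function.Injective (g ∘ σ) := hginj.comp σ.injective
  have hg : StrictMono (g ∘ σ) := (Tuple.monotone_sort g).strictMono_of_injective hinj
  obtain ⟨hr1, hr2, hr3⟩ := mem_tri'.mp hr
  have key : ∀ x : Fin (k + m), g x = (g ∘ σ) (σ⁻¹ x) := by
    intro x
    simp [Function.comp]
  constructor
  · rw [mem_shuffles]
    constructor
    · intro a b hab
      have ea : (r * E2 h (k + m) σ) (Fin.castAdd (k + m) a) = r (Fin.castAdd (k + m) a) := by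
        simp only [Equiv.Perm.mul_apply, E2_castAdd]
      have eb : (r * E2 h (k + m) σ) (Fin.castAdd (k + m) b) = r (Fin.castAdd (k + m) b) := by
        simp only [Equiv.Perm.mul_apply, E2_castAdd]
      rw [ea, eb]
      exact hr1 a b hab
    · intro a b hab
      have ea : (r * E2 h (k + m) σ) (Fin.natAdd h a) = (g ∘ σ) a := by
        simp only [Equiv.Perm.mul_apply, E2_natAdd, Function.comp, hgdef]
      have eb : (r * E2 h (k + m) σ) (Fin.natAdd h b) = (g ∘ σ) b := by
        simp only [Equiv.Perm.mul_apply, E2_natAdd, Function.comp, hgdef]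
      rw [ea, eb]
      exact hg hab
  · rw [mem_shuffles]
    constructor
    · intro a b hab
      have hfab : g (Fin.castAdd m a) < g (Fin.castAdd m b) := hr2 a b hab
      rw [key (Fin.castAdd m a), key (Fin.castAdd m b)] at hfab
      exact hg.lt_iff_lt.mp hfab
    · intro a b hab
      have hfab : g (Fin.natAdd k a) < g (Fin.natAdd k b) := hr3 a b hab
      rw [key (Fin.natAdd k a), key (Fin.natAdd k b)] at hfab
      exact hg.lt_iff_lt.mp hfab

lemma factor_unique {h k m : ℕ} {p₁ p₂ : Equiv.Perm (Fin (h + k + m))}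
    {s₁ s₂ : Equiv.Perm (Fin (h + k))}
    (hp₁ : p₁ ∈ shuffles (h + k) m) (hp₂ : p₂ ∈ shuffles (h + k) m)
    (heq : p₁ * E1 (h + k) m s₁ = p₂ * E1 (h + k) m s₂) : p₁ = p₂ ∧ s₁ = s₂ := by
  set t := s₂ * s₁⁻¹ with ht
  have key : ∀ a : Fin (h + k), p₁ (Fin.castAdd m a) = p₂ (Fin.castAdd m (t a)) := by
    intro a
    have h1 : (p₁ * E1 (h + k) m s₁) (Fin.castAdd m (s₁⁻¹ a)) = p₁ (Fin.castAdd m a) := by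
      simp [Equiv.Perm.mul_apply, E1_castAdd]
    have h2 : (p₂ * E1 (h + k) m s₂) (Fin.castAdd m (s₁⁻¹ a)) = p₂ (Fin.castAdd m (t a)) := by
      simp [Equiv.Perm.mul_apply, E1_castAdd, ht]
    rw [← h1, heq, h2]
  have hmono1 : StrictMono (fun x : Fin (h + k) => p₁ (Fin.castAdd m x)) :=
    fun a b hab => (mem_shuffles.mp hp₁).1 a b hab
  have hmono2 : StrictMono (fun x : Fin (h + k) => p₂ (Fin.castAdd m x)) :=
    fun a b hab => (mem_shuffles.mp hp₂).1 a b hab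
  have htm : StrictMono (⇑t) := by
    intro a b hab
    have h1 : p₁ (Fin.castAdd m a) < p₁ (Fin.castAdd m b) := hmono1 hab
    rw [key a, key b] at h1
    exact hmono2.lt_iff_lt.mp h1
  have hteq : ⇑t = id := by
    refine (@StrictMono.range_inj (Fin (h + k)) (Fin (h + k)) _ _
      (inferInstance : WellFoundedLT (Fin (h + k))) _ _ htm
      (strictMono_id (α := Fin (h + k)))).mp ?_
    rw [t.surjective.range_eq, Set.range_id]
  have ht1 : t = 1 := Equiv.ext fun x => congrFun hteq x
  have hs : s₂ = s₁ := by
    rw [ht] at ht1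
    exact mul_inv_eq_one.mp ht1
  refine ⟨?_, hs.symm⟩
  rw [hs] at heq
  exact mul_right_cancel heq

lemma factor_unique' {h k m : ℕ} {p₁ p₂ : Equiv.Perm (Fin (h + (k + m)))}
    {s₁ s₂ : Equiv.Perm (Fin (k + m))}
    (hp₁ : p₁ ∈ shuffles h (k + m)) (hp₂ : p₂ ∈ shuffles h (k + m))
    (heq : p₁ * E2 h (k + m) s₁ = p₂ * E2 h (k + m) s₂) : p₁ = p₂ ∧ s₁ = s₂ := by
  set t := s₂ * s₁⁻¹ with ht
  have key : ∀ a : Fin (k + m), p₁ (Fin.natAdd h a) = p₂ (Fin.natAdd h (t a)) := by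
    intro a
    have h1 : (p₁ * E2 h (k + m) s₁) (Fin.natAdd h (s₁⁻¹ a)) = p₁ (Fin.natAdd h a) := by
      simp [Equiv.Perm.mul_apply, E2_natAdd]
    have h2 : (p₂ * E2 h (k + m) s₂) (Fin.natAdd h (s₁⁻¹ a)) = p₂ (Fin.natAdd h (t a)) := by
      simp [Equiv.Perm.mul_apply, E2_natAdd, ht]
    rw [← h1, heq, h2]
  have hmono1 : StrictMono (fun x : Fin (k + m) => p₁ (Fin.natAdd h x)) :=
    fun a b hab => (mem_shuffles.mp hp₁).2 a b hab
  have hmono2 : StrictMono (fun x : Fin (k + m) => p₂ (Fin.natAdd h x)) :=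
    fun a b hab => (mem_shuffles.mp hp₂).2 a b hab
  have htm : StrictMono (⇑t) := by
    intro a b hab
    have h1 : p₁ (Fin.natAdd h a) < p₁ (Fin.natAdd h b) := hmono1 hab
    rw [key a, key b] at h1
    exact hmono2.lt_iff_lt.mp h1
  have hteq : ⇑t = id := by
    refine (@StrictMono.range_inj (Fin (k + m)) (Fin (k + m)) _ _
      (inferInstance : WellFoundedLT (Fin (k + m))) _ _ htm
      (strictMono_id (α := Fin (k + m)))).mp ?_
    rw [t.surjective.range_eq, Set.range_id]
  have ht1 : t = 1 := Equiv.ext fun x => congrFun hteq x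
  have hs : s₂ = s₁ := by
    rw [ht] at ht1
    exact mul_inv_eq_one.mp ht1
  refine ⟨?_, hs.symm⟩
  rw [hs] at heq
  exact mul_right_cancel heq

lemma invNum_mul_E1 {h k m : ℕ} {p : Equiv.Perm (Fin (h + k + m))} {s : Equiv.Perm (Fin (h + k))}
    (hp : p ∈ shuffles (h + k) m) :
    invNum (h + k + m) (p * E1 (h + k) m s) = invNum (h + k + m) p + invNum (h + k) s := by
  rw [invNum_mul_initial (h + k) p (E1 (h + k) m s) ?_ ?_ ?_ ?_, invNum_E1]
  · intro a ha
    rw [E1_apply_lt _ ha]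
    simp only [Fin.coe_castAdd]
    exact (s ⟨a.val, ha⟩).isLt
  · intro a ha
    exact E1_apply_ge _ ha
  · intro a b ha hb hab
    exact shuffles_lt₁ hp ha hb hab
  · intro a b ha hb hab
    exact shuffles_lt₂ hp ha hb hab

lemma invNum_mul_E2 {h k m : ℕ} {p : Equiv.Perm (Fin (h + (k + m)))}
    {s : Equiv.Perm (Fin (k + m))} (hp : p ∈ shuffles h (k + m)) :
    invNum (h + (k + m)) (p * E2 h (k + m) s)
      = invNum (h + (k + m)) p + invNum (k + m) s := by
  rw [invNum_mul_final h p (E2 h (k + m) s) ?_ ?_ ?_ ?_, invNum_E2]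
  · intro a ha
    rw [E2_apply_ge _ ha]
    simp only [Fin.coe_natAdd]
    omega
  · intro a ha
    exact E2_apply_lt _ ha
  · intro a b ha hb hab
    exact shuffles_lt₁ hp ha hb hab
  · intro a b ha hb hab
    exact shuffles_lt₂ hp ha hb hab

lemma lhs_expand (q : ℝ) (h k m : ℕ) (u : (Fin h → ℕ) → ℂ) (v : (Fin k → ℕ) → ℂ)
    (w : (Fin m → ℕ) → ℂ) (i : Fin (h + k + m) → ℕ) :
    wedgeQ q (h + k) m (wedgeQ q h k u v) w i
      = ∑ r ∈ tri h k m, ((-q⁻¹ : ℂ) ^ invNum (h + k + m) r)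
          * u (fun a => i (r (Fin.castAdd m (Fin.castAdd k a))))
          * v (fun a => i (r (Fin.castAdd m (Fin.natAdd h a))))
          * w (fun a => i (r (Fin.natAdd (h + k) a))) := by
  classical
  unfold wedgeQ
  simp only [Finset.mul_sum, Finset.sum_mul]
  rw [← Finset.sum_product']
  refine Finset.sum_bij' (fun x (_ : x ∈ shuffles (h + k) m ×ˢ shuffles h k) =>
      x.1 * E1 (h + k) m x.2)
    (fun r (_ : r ∈ tri h k m) =>
      (r * E1 (h + k) m (Tuple.sort (fun a : Fin (h + k) => r (Fin.castAdd m a))),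
        (Tuple.sort (fun a : Fin (h + k) => r (Fin.castAdd m a)))⁻¹)) ?_ ?_ ?_ ?_ ?_
  · rintro ⟨p, s⟩ hx
    rw [Finset.mem_product] at hx
    exact mul_mem_tri hx.1 hx.2
  · intro r hr
    rw [Finset.mem_product]
    exact ⟨(left_fact hr).1, (left_fact hr).2⟩
  · rintro ⟨p, s⟩ hx
    rw [Finset.mem_product] at hx
    set r := p * E1 (h + k) m s with hrdef
    set σ := Tuple.sort (fun a : Fin (h + k) => r (Fin.castAdd m a)) with hσ
    have hfact := left_fact (mul_mem_tri hx.1 hx.2)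
    have heq : (r * E1 (h + k) m σ) * E1 (h + k) m σ⁻¹ = p * E1 (h + k) m s := by
      rw [mul_assoc, ← E1_mul, mul_inv_cancel, E1_one, mul_one]
    obtain ⟨h1, h2⟩ := factor_unique hfact.1 hx.1 heq
    exact Prod.ext h1 h2
  · intro r hr
    simp only
    rw [mul_assoc, ← E1_mul, mul_inv_cancel, E1_one, mul_one]
  · rintro ⟨p, s⟩ hx
    rw [Finset.mem_product] at hx
    have hiv := invNum_mul_E1 (m := m) (s := s) hx.1
    simp only [Equiv.Perm.mul_apply, E1_castAdd, E1_natAdd, hiv, pow_add]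
    ring

lemma rhs_expand (q : ℝ) (h k m : ℕ) (u : (Fin h → ℕ) → ℂ) (v : (Fin k → ℕ) → ℂ)
    (w : (Fin m → ℕ) → ℂ) (j : Fin (h + (k + m)) → ℕ) :
    wedgeQ q h (k + m) u (wedgeQ q k m v w) j
      = ∑ r ∈ tri' h k m, ((-q⁻¹ : ℂ) ^ invNum (h + (k + m)) r)
          * u (fun a => j (r (Fin.castAdd (k + m) a)))
          * v (fun a => j (r (Fin.natAdd h (Fin.castAdd m a))))
          * w (fun a => j (r (Fin.natAdd h (Fin.natAdd k a)))) := by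
  classical
  unfold wedgeQ
  simp only [Finset.mul_sum, Finset.sum_mul]
  rw [← Finset.sum_product']
  refine Finset.sum_bij' (fun x (_ : x ∈ shuffles h (k + m) ×ˢ shuffles k m) =>
      x.1 * E2 h (k + m) x.2)
    (fun r (_ : r ∈ tri' h k m) =>
      (r * E2 h (k + m) (Tuple.sort (fun b : Fin (k + m) => r (Fin.natAdd h b))),
        (Tuple.sort (fun b : Fin (k + m) => r (Fin.natAdd h b)))⁻¹)) ?_ ?_ ?_ ?_ ?_
  · rintro ⟨p, s⟩ hx
    rw [Finset.mem_product] at hx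
    exact mul_mem_tri' hx.1 hx.2
  · intro r hr
    rw [Finset.mem_product]
    exact ⟨(right_fact hr).1, (right_fact hr).2⟩
  · rintro ⟨p, s⟩ hx
    rw [Finset.mem_product] at hx
    set r := p * E2 h (k + m) s with hrdef
    set σ := Tuple.sort (fun b : Fin (k + m) => r (Fin.natAdd h b)) with hσ
    have hfact := right_fact (mul_mem_tri' hx.1 hx.2)
    have heq : (r * E2 h (k + m) σ) * E2 h (k + m) σ⁻¹ = p * E2 h (k + m) s := by
      rw [mul_assoc, ← E2_mul, mul_inv_cancel, E2_one, mul_one]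
    obtain ⟨h1, h2⟩ := factor_unique' hfact.1 hx.1 heq
    exact Prod.ext h1 h2
  · intro r hr
    simp only
    rw [mul_assoc, ← E2_mul, mul_inv_cancel, E2_one, mul_one]
  · rintro ⟨p, s⟩ hx
    rw [Finset.mem_product] at hx
    have hiv := invNum_mul_E2 (s := s) hx.1
    simp only [Equiv.Perm.mul_apply, E2_castAdd, E2_natAdd, hiv, pow_add]
    ring

lemma invNum_congr {n n' : ℕ} (hnn : n = n') (p : Equiv.Perm (Fin n)) :
    invNum n' ((finCongr hnn).permCongr p) = invNum n p := by
  subst hnn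
  have : (finCongr rfl).permCongr p = p := Equiv.ext fun x => by
    simp [Equiv.permCongr_apply]
  rw [this]

lemma tri_transfer (q : ℝ) (h k m : ℕ) (u : (Fin h → ℕ) → ℂ) (v : (Fin k → ℕ) → ℂ)
    (w : (Fin m → ℕ) → ℂ) (i : Fin (h + k + m) → ℕ) :
    (∑ r ∈ tri h k m, ((-q⁻¹ : ℂ) ^ invNum (h + k + m) r)
          * u (fun a => i (r (Fin.castAdd m (Fin.castAdd k a))))
          * v (fun a => i (r (Fin.castAdd m (Fin.natAdd h a))))
          * w (fun a => i (r (Fin.natAdd (h + k) a))))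
      = ∑ r ∈ tri' h k m, ((-q⁻¹ : ℂ) ^ invNum (h + (k + m)) r)
          * u (fun a => i (Fin.cast (add_assoc h k m).symm (r (Fin.castAdd (k + m) a))))
          * v (fun a => i (Fin.cast (add_assoc h k m).symm (r (Fin.natAdd h (Fin.castAdd m a)))))
          * w (fun a =>
              i (Fin.cast (add_assoc h k m).symm (r (Fin.natAdd h (Fin.natAdd k a))))) := by
  classical
  set e : Fin (h + k + m) ≃ Fin (h + (k + m)) := finCongr (add_assoc h k m) with he
  have hce1 : ∀ a : Fin h, e.symm (Fin.castAdd (k + m) a) = Fin.castAdd m (Fin.castAdd k a) :=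
    fun a => Fin.ext (by simp [he])
  have hce2 : ∀ a : Fin k,
      e.symm (Fin.natAdd h (Fin.castAdd m a)) = Fin.castAdd m (Fin.natAdd h a) :=
    fun a => Fin.ext (by simp [he])
  have hce3 : ∀ a : Fin m,
      e.symm (Fin.natAdd h (Fin.natAdd k a)) = Fin.natAdd (h + k) a :=
    fun a => Fin.ext (by simp [he]; omega)
  have helt : ∀ x y : Fin (h + k + m), e x < e y ↔ x < y := by
    intro x y
    rw [Fin.lt_def, Fin.lt_def]
    simp [he]
  have hcast : ∀ x : Fin (h + k + m), Fin.cast (add_assoc h k m).symm (e x) = x :=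
    fun x => Fin.ext (by simp [he])
  refine Finset.sum_bij' (fun r (_ : r ∈ tri h k m) => e.permCongr r)
    (fun r (_ : r ∈ tri' h k m) => e.symm.permCongr r) ?_ ?_ ?_ ?_ ?_
  · intro r hr
    obtain ⟨h1, h2, h3⟩ := mem_tri.mp hr
    rw [mem_tri']
    refine ⟨?_, ?_, ?_⟩
    · intro a b hab
      simp only [Equiv.permCongr_apply, hce1]
      exact (helt _ _).mpr (h1 a b hab)
    · intro a b hab
      simp only [Equiv.permCongr_apply, hce2]
      exact (helt _ _).mpr (h2 a b hab)
    · intro a b hab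
      simp only [Equiv.permCongr_apply, hce3]
      exact (helt _ _).mpr (h3 a b hab)
  · intro r hr
    obtain ⟨h1, h2, h3⟩ := mem_tri'.mp hr
    rw [mem_tri]
    have helt' : ∀ x y : Fin (h + (k + m)), e.symm x < e.symm y ↔ x < y := by
      intro x y
      rw [Fin.lt_def, Fin.lt_def]
      simp [he]
    have hce1' : ∀ a : Fin h, e (Fin.castAdd m (Fin.castAdd k a)) = Fin.castAdd (k + m) a :=
      fun a => by rw [← hce1 a, Equiv.apply_symm_apply]
    have hce2' : ∀ a : Fin k,
        e (Fin.castAdd m (Fin.natAdd h a)) = Fin.natAdd h (Fin.castAdd m a) :=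
      fun a => by rw [← hce2 a, Equiv.apply_symm_apply]
    have hce3' : ∀ a : Fin m,
        e (Fin.natAdd (h + k) a) = Fin.natAdd h (Fin.natAdd k a) :=
      fun a => by rw [← hce3 a, Equiv.apply_symm_apply]
    refine ⟨?_, ?_, ?_⟩
    · intro a b hab
      simp only [Equiv.permCongr_apply, Equiv.symm_symm, hce1']
      exact (helt' _ _).mpr (h1 a b hab)
    · intro a b hab
      simp only [Equiv.permCongr_apply, Equiv.symm_symm, hce2']
      exact (helt' _ _).mpr (h2 a b hab)
    · intro a b hab
      simp only [Equiv.permCongr_apply, Equiv.symm_symm, hce3']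
      exact (helt' _ _).mpr (h3 a b hab)
  · intro r hr
    exact Equiv.ext fun x => by simp [Equiv.permCongr_apply]
  · intro r hr
    exact Equiv.ext fun x => by simp [Equiv.permCongr_apply]
  · intro r hr
    have hin : invNum (h + (k + m)) (e.permCongr r) = invNum (h + k + m) r :=
      invNum_congr (add_assoc h k m) r
    simp only [hin, Equiv.permCongr_apply, hce1, hce2, hce3, hcast]

end WedgeQAux

theorem wedgeQ_assoc (q : ℝ) (hq0 : 0 < q) (hq1 : q < 1) (ℓ : ℕ) (hℓ : 2 ≤ ℓ)
    (h k m : ℕ)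
    (u : (Fin h → ℕ) → ℂ) (v : (Fin k → ℕ) → ℂ) (w : (Fin m → ℕ) → ℂ)
    (i : Fin (h + k + m) → ℕ) (hmono : StrictMono i)
    (hbd : ∀ a, 1 ≤ i a ∧ i a ≤ ℓ) :
    wedgeQ q (h + k) m (wedgeQ q h k u v) w i
      = wedgeQ q h (k + m) u (wedgeQ q k m v w)
          (fun a => i (Fin.cast (add_assoc h k m).symm a)) := by
  rw [WedgeQAux.lhs_expand, WedgeQAux.rhs_expand]
  exact WedgeQAux.tri_transfer q h k m u v w i
end

section
/- For the iterated q-wedge of n vectors v¹,…,vⁿ ∈ W_1 = ℂ^ℓ, one has (v¹ ∧_q … ∧_q vⁿ)_i = Σ_{p ∈ S_n} (−q^{−1})^{‖p‖} v¹_{i_{p(1)}} ⋯ vⁿ_{i_{p(n)}} for every strictly increasing n-tuple i, i.e. the iterated product is a q-deformed determinant of the matrix (v^a_{i_b}). -/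
/-- The iterated (left-associated) q-wedge product of `n` vectors in `W_1`. -/
noncomputable def itWedge (q : ℝ) : (n : ℕ) → (Fin n → ((Fin 1 → ℕ) → ℂ)) →
    ((Fin n → ℕ) → ℂ)
  | 0, _ => fun _ => 1
  | n + 1, v => wedgeQ q n 1 (itWedge q n (fun a => v a.castSucc)) (v (Fin.last n))


lemma invNum_eq_sum (n : ℕ) (p : Equiv.Perm (Fin n)) :
    invNum n p = ∑ x : Fin n, ∑ y : Fin n, if x < y ∧ p y < p x then 1 else 0 := by
  rw [invNum, Finset.card_filter, Fintype.sum_prod_type]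

def pext {n : ℕ} (τ : Equiv.Perm (Fin n)) : Equiv.Perm (Fin (n+1)) :=
  (finSumFinEquiv (m := n) (n := 1)).permCongr (Equiv.sumCongr τ 1)

lemma pext_castSucc {n : ℕ} (τ : Equiv.Perm (Fin n)) (a : Fin n) :
    pext τ a.castSucc = (τ a).castSucc := by
  show pext τ (Fin.castAdd 1 a) = Fin.castAdd 1 (τ a)
  simp [pext, Equiv.permCongr_apply]

lemma pext_last {n : ℕ} (τ : Equiv.Perm (Fin n)) :
    pext τ (Fin.last n) = Fin.last n := by
  show pext τ (Fin.natAdd n 0) = Fin.natAdd n 0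
  simp [pext, Equiv.permCongr_apply]

def sh (n : ℕ) (j : Fin (n+1)) : Equiv.Perm (Fin (n+1)) where
  toFun x := ⟨if x.val = n then j.val else if x.val < j.val then x.val else x.val + 1,
    by have := x.isLt; have := j.isLt; split_ifs <;> omega⟩
  invFun y := ⟨if y.val < j.val then y.val else if y.val = j.val then n else y.val - 1,
    by have := y.isLt; have := j.isLt; split_ifs <;> omega⟩
  left_inv x := by
    have hx := x.isLt
    have hj := j.isLt
    apply Fin.ext
    simp only [Equiv.coe_fn_mk]
    split_ifs <;> omega
  right_inv y := by
    have hy := y.isLt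
    have hj := j.isLt
    apply Fin.ext
    simp only [Equiv.coe_fn_mk]
    split_ifs <;> omega

lemma sh_val (n : ℕ) (j : Fin (n+1)) (x : Fin (n+1)) :
    (sh n j x).val = if x.val = n then j.val
      else if x.val < j.val then x.val else x.val + 1 := rfl

lemma sh_last (n : ℕ) (j : Fin (n+1)) : sh n j (Fin.last n) = j := by
  apply Fin.ext
  rw [sh_val]
  simp

lemma sh_castSucc_val (n : ℕ) (j : Fin (n+1)) (a : Fin n) :
    ((sh n j) a.castSucc).val = if a.val < j.val then a.val else a.val + 1 := by
  have ha := a.isLt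
  rw [sh_val]
  simp only [Fin.coe_castSucc]
  rw [if_neg (by omega)]

lemma sh_strictMono (n : ℕ) (j : Fin (n+1)) :
    StrictMono (fun a : Fin n => sh n j a.castSucc) := by
  intro a b hab
  have : a.val < b.val := hab
  simp only [Fin.lt_def, sh_castSucc_val]
  split_ifs <;> omega

lemma sh_mem (n : ℕ) (j : Fin (n+1)) : sh n j ∈ shuffles n 1 := by
  simp only [shuffles, Finset.mem_filter]
  refine ⟨Finset.mem_univ _, fun a b hab => sh_strictMono n j hab, fun a b hab => ?_⟩
  exact absurd hab (by omega)

lemma mem_shuffles_strictMono {n : ℕ} {p : Equiv.Perm (Fin (n+1))}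
    (hp : p ∈ shuffles n 1) : StrictMono (fun a : Fin n => p a.castSucc) := by
  simp only [shuffles, Finset.mem_filter] at hp
  exact fun a b hab => hp.2.1 a b hab

lemma shuffle_eq_of_last_eq {n : ℕ} {p₁ p₂ : Equiv.Perm (Fin (n+1))}
    (h₁ : p₁ ∈ shuffles n 1) (h₂ : p₂ ∈ shuffles n 1)
    (hl : p₁ (Fin.last n) = p₂ (Fin.last n)) : p₁ = p₂ := by
  set s : Finset (Fin (n+1)) := Finset.univ.erase (p₁ (Fin.last n)) with hs
  have hcard : s.card = n := by
    rw [hs, Finset.card_erase_of_mem (Finset.mem_univ _)]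
    simp
  have key : ∀ (p : Equiv.Perm (Fin (n+1))), p ∈ shuffles n 1 →
      p (Fin.last n) = p₁ (Fin.last n) →
      (fun a : Fin n => p a.castSucc) = s.orderEmbOfFin hcard := by
    intro p hp hpl
    apply Finset.orderEmbOfFin_unique hcard
    · intro x
      rw [hs, Finset.mem_erase]
      refine ⟨?_, Finset.mem_univ _⟩
      rw [← hpl]
      intro hc
      have := p.injective hc
      exact absurd this (by
        intro h
        have := congrArg Fin.val h
        simp at this
        omega)
    · exact mem_shuffles_strictMono hp
  have e1 := key p₁ h₁ rfl
  have e2 := key p₂ h₂ hl.symm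
  apply Equiv.ext
  intro x
  induction x using Fin.lastCases with
  | last => exact hl
  | cast a => exact (congrFun e1 a).trans (congrFun e2 a).symm

lemma shuffles_eq_image (n : ℕ) :
    shuffles n 1 = Finset.image (fun j => sh n j) Finset.univ := by
  apply Finset.ext
  intro p
  simp only [Finset.mem_image, Finset.mem_univ, true_and]
  constructor
  · intro hp
    exact ⟨p (Fin.last n), (shuffle_eq_of_last_eq (sh_mem n _) hp (sh_last n _)).symm ▸ rfl⟩
  · rintro ⟨j, rfl⟩
    exact sh_mem n j

lemma sh_injective (n : ℕ) : Function.Injective (sh n) := by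
  intro j₁ j₂ h
  have := congrArg (fun p : Equiv.Perm (Fin (n+1)) => p (Fin.last n)) h
  simpa [sh_last] using this

lemma pext_injective {n : ℕ} : Function.Injective (pext (n := n)) := by
  intro τ₁ τ₂ h
  apply Equiv.ext
  intro a
  have := congrArg (fun p : Equiv.Perm (Fin (n+1)) => p a.castSucc) h
  simp only [pext_castSucc] at this
  exact Fin.castSucc_injective n this

lemma phi_bijective (n : ℕ) :
    Function.Bijective (fun jt : Fin (n+1) × Equiv.Perm (Fin n) => sh n jt.1 * pext jt.2) := by
  rw [Fintype.bijective_iff_injective_and_card]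
  constructor
  · rintro ⟨j₁, τ₁⟩ ⟨j₂, τ₂⟩ h
    simp only at h
    have hj : j₁ = j₂ := by
      have := congrArg (fun p : Equiv.Perm (Fin (n+1)) => p (Fin.last n)) h
      simpa [Equiv.Perm.mul_apply, pext_last, sh_last] using this
    subst hj
    have hτ : pext τ₁ = pext τ₂ := mul_left_cancel h
    exact Prod.ext rfl (pext_injective hτ)
  · simp [Fintype.card_perm, Nat.factorial_succ]

lemma invNum_succ {n : ℕ} (σ : Equiv.Perm (Fin (n+1))) :
    invNum (n+1) σ =
      (∑ a : Fin n, ∑ b : Fin n,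
        if a < b ∧ σ b.castSucc < σ a.castSucc then 1 else 0)
      + ∑ a : Fin n, if σ (Fin.last n) < σ a.castSucc then 1 else 0 := by
  rw [invNum_eq_sum, Fin.sum_univ_castSucc]
  have hlast : ∀ y : Fin (n+1), ¬ (Fin.last n < y) := fun y => not_lt.mpr (Fin.le_last y)
  have : (∑ y : Fin (n+1), if Fin.last n < y ∧ σ y < σ (Fin.last n) then 1 else 0) = 0 := by
    apply Finset.sum_eq_zero
    intro y _
    rw [if_neg (fun h => hlast y h.1)]
  rw [this, add_zero]
  have step : ∀ a : Fin n,
      (∑ y : Fin (n+1), if a.castSucc < y ∧ σ y < σ a.castSucc then 1 else 0)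
      = (∑ b : Fin n, if a < b ∧ σ b.castSucc < σ a.castSucc then 1 else 0)
        + (if σ (Fin.last n) < σ a.castSucc then 1 else 0) := by
    intro a
    rw [Fin.sum_univ_castSucc]
    have A : (∑ b : Fin n, if a.castSucc < b.castSucc ∧ σ b.castSucc < σ a.castSucc then 1 else 0)
        = ∑ b : Fin n, if a < b ∧ σ b.castSucc < σ a.castSucc then 1 else 0 := by
      apply Finset.sum_congr rfl
      intro b _
      simp [Fin.castSucc_lt_castSucc_iff]
    have B : (if a.castSucc < Fin.last n ∧ σ (Fin.last n) < σ a.castSucc then 1 else 0)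
        = if σ (Fin.last n) < σ a.castSucc then 1 else 0 := by
      simp [Fin.castSucc_lt_last]
    rw [A, B]
  simp only [step]
  rw [Finset.sum_add_distrib]

lemma invNum_shuffle {n : ℕ} {p : Equiv.Perm (Fin (n+1))} (hp : p ∈ shuffles n 1) :
    invNum (n+1) p = ∑ a : Fin n, if p (Fin.last n) < p a.castSucc then 1 else 0 := by
  rw [invNum_succ]
  have hm := mem_shuffles_strictMono hp
  have : (∑ a : Fin n, ∑ b : Fin n,
      if a < b ∧ p b.castSucc < p a.castSucc then 1 else 0) = 0 := by
    apply Finset.sum_eq_zero; intro a _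
    apply Finset.sum_eq_zero; intro b _
    rw [if_neg]
    rintro ⟨h1, h2⟩
    exact absurd (hm h1) (not_lt.mpr h2.le)
  rw [this, zero_add]

lemma invNum_shuffle_mul {n : ℕ} {p : Equiv.Perm (Fin (n+1))}
    (hp : p ∈ shuffles n 1) (τ : Equiv.Perm (Fin n)) :
    invNum (n+1) (p * pext τ) = invNum (n+1) p + invNum n τ := by
  have hm := mem_shuffles_strictMono hp
  have h1 : ∀ b : Fin n, (p * pext τ) b.castSucc = p (τ b).castSucc := by
    intro b
    simp [Equiv.Perm.mul_apply, pext_castSucc]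
  have h2 : (p * pext τ) (Fin.last n) = p (Fin.last n) := by
    simp [Equiv.Perm.mul_apply, pext_last]
  rw [invNum_succ]
  simp only [h1, h2]
  have e1 : (∑ a : Fin n, ∑ b : Fin n,
      if a < b ∧ p (τ b).castSucc < p (τ a).castSucc then 1 else 0) = invNum n τ := by
    rw [invNum_eq_sum]
    apply Finset.sum_congr rfl; intro a _
    apply Finset.sum_congr rfl; intro b _
    congr 1
    have : p (τ b).castSucc < p (τ a).castSucc ↔ τ b < τ a := by
      constructor
      · intro h
        by_contra hc
        rcases lt_or_eq_of_le (not_lt.mp hc) with h' | h'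
        · exact absurd (hm h') (not_lt.mpr h.le)
        · rw [h'] at h; exact lt_irrefl _ h
      · exact fun h => hm h
    simp [this]
  have e2 : (∑ a : Fin n, if p (Fin.last n) < p (τ a).castSucc then 1 else 0)
      = invNum (n+1) p := by
    rw [invNum_shuffle hp]
    exact Equiv.sum_comp τ (fun a => if p (Fin.last n) < p a.castSucc then 1 else 0)
  rw [e1, e2, add_comm]

lemma itWedge_formula (q : ℝ) (n : ℕ) : ∀ (V : Fin n → ((Fin 1 → ℕ) → ℂ)) (i : Fin n → ℕ),
    itWedge q n V i = ∑ p : Equiv.Perm (Fin n),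
      ((-q⁻¹ : ℂ) ^ invNum n p) * ∏ a : Fin n, V a (fun _ => i (p a)) := by
  induction n with
  | zero =>
    intro V i
    have h1 : ∀ p : Equiv.Perm (Fin 0), invNum 0 p = 0 := by
      intro p; simp [invNum]
    simp [itWedge, h1, Finset.sum_const, Fintype.card_perm]
  | succ n ih =>
    intro V i
    show wedgeQ q n 1 (itWedge q n (fun a => V a.castSucc)) (V (Fin.last n)) i = _
    rw [wedgeQ]
    rw [shuffles_eq_image, Finset.sum_image (fun x _ y _ h => sh_injective n h)]
    rw [← Fintype.sum_bijective _ (phi_bijective n)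
        (fun jt : Fin (n+1) × Equiv.Perm (Fin n) =>
          ((-q⁻¹ : ℂ) ^ invNum (n+1) (sh n jt.1 * pext jt.2)) *
            ∏ a : Fin (n+1), V a (fun _ => i ((sh n jt.1 * pext jt.2) a)))
        _ (fun x => rfl)]
    rw [Fintype.sum_prod_type]
    apply Finset.sum_congr rfl
    intro j _
    rw [ih (fun a => V a.castSucc) (fun a => i (sh n j (Fin.castAdd 1 a)))]
    rw [Finset.mul_sum, Finset.sum_mul]
    apply Finset.sum_congr rfl
    intro τ _
    rw [invNum_shuffle_mul (sh_mem n j) τ, pow_add, Fin.prod_univ_castSucc]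
    have hcs : ∀ a : Fin n, (sh n j * pext τ) a.castSucc = sh n j (Fin.castAdd 1 (τ a)) := by
      intro a
      simp [Equiv.Perm.mul_apply, pext_castSucc]
      rfl
    have hlast : (sh n j * pext τ) (Fin.last n) = sh n j (Fin.last n) := by
      simp [Equiv.Perm.mul_apply, pext_last]
    simp only [hcs, hlast]
    have hw : (fun a : Fin 1 => i (sh n j (Fin.natAdd n a)))
        = fun _ => i (sh n j (Fin.last n)) := by
      funext a
      rw [Fin.eq_zero a]
      rfl
    rw [hw]
    ring

theorem itWedge_eq_qdet (q : ℝ) (hq0 : 0 < q) (hq1 : q < 1) (ℓ n : ℕ)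
    (hn : 1 ≤ n) (hnℓ : n ≤ ℓ) (V : Fin n → ((Fin 1 → ℕ) → ℂ))
    (i : Fin n → ℕ) (hmono : StrictMono i) (hbd : ∀ a, 1 ≤ i a ∧ i a ≤ ℓ) :
    itWedge q n V i
      = ∑ p : Equiv.Perm (Fin n),
          ((-q⁻¹ : ℂ) ^ invNum n p) * ∏ a : Fin n, V a (fun _ => i (p a)) := by
  exact itWedge_formula q n V i
end

section
/- Let n = (n₁, 0, …, 0, n_ℓ) + e_k ∈ ℕ^ℓ (i.e. n_i = n₁δ_{i,1} + n_ℓδ_{i,ℓ} + δ_{i,k}) for some 1 ≤ k ≤ ℓ. Then the Weyl dimension formula dim V_n = Π_{1≤r≤s≤ℓ}(s−r+1+Σ_{i=r}^s n_i) / Π_{r=1}^ℓ r! evaluates to dim V_n = [k(n₁+n_ℓ+ℓ+1)/((n₁+k)(n_ℓ+ℓ+1−k))] · C(n₁+ℓ, ℓ) · C(n_ℓ+ℓ, ℓ) · C(ℓ, k), where C(·,·) are binomial coefficients. -/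
open Finset

lemma prod_Ioc_asc (x m : ℕ) :
    ∏ s ∈ Ioc 0 m, ((x : ℚ) + s) = ((x + m).choose m : ℚ) * (m.factorial : ℚ) := by
  induction m with
  | zero => simp
  | succ m ih =>
    rw [Finset.prod_Ioc_succ_top (Nat.zero_le _), ih]
    have h := Nat.add_one_mul_choose_eq (x + m) m
    have h' : ((x + m + 1 : ℕ) : ℚ) * ((x + m).choose m : ℚ)
        = ((x + m + 1).choose (m + 1) : ℚ) * ((m + 1 : ℕ) : ℚ) := by
      have := congrArg (fun t : ℕ => (t : ℚ)) h
      push_cast at this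
      push_cast
      linarith
    have hf : ((m + 1).factorial : ℚ) = ((m + 1 : ℕ) : ℚ) * (m.factorial : ℚ) := by
      rw [Nat.factorial_succ]; push_cast; ring
    have hx : (x : ℚ) + ((m + 1 : ℕ) : ℚ) = ((x + m + 1 : ℕ) : ℚ) := by push_cast; ring
    have : (x + (m + 1)) = (x + m + 1) := by ring
    rw [this, hf]
    push_cast at h' ⊢
    nlinarith [h']

lemma prod_Ioc_shift (f : ℕ → ℚ) (a b c : ℕ) :
    ∏ s ∈ Ioc a b, f (s + c) = ∏ s ∈ Ioc (a + c) (b + c), f s := by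
  rw [← Finset.map_add_right_Ioc, Finset.prod_map]
  rfl

lemma prod_Ioc_reflect (f : ℕ → ℚ) (a b c : ℕ) (hb : b ≤ c) :
    ∏ s ∈ Ioc a b, f (c + 1 - s) = ∏ s ∈ Ioc (c - b) (c - a), f s := by
  refine Finset.prod_nbij' (fun s => c + 1 - s) (fun s => c + 1 - s) ?_ ?_ ?_ ?_ ?_
  · intro s hs; simp only [Finset.mem_Ioc] at *; omega
  · intro s hs; simp only [Finset.mem_Ioc] at *; omega
  · intro s hs; simp only [Finset.mem_Ioc] at *; omega
  · intro s hs; simp only [Finset.mem_Ioc] at *; omega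
  · intro s hs; rfl

lemma prod_bump (x m j : ℕ) (hj1 : 1 ≤ j) (hjm : j ≤ m) :
    (∏ s ∈ Ioc 0 (m - 1), ((x : ℚ) + s + if j ≤ s then 1 else 0)) * ((x : ℚ) + j)
      = ((x + m).choose m : ℚ) * (m.factorial : ℚ) := by
  have h1 : Ioc 0 (m - 1) = Ioc 0 (j - 1) ∪ Ioc (j - 1) (m - 1) := by
    rw [Finset.Ioc_union_Ioc_eq_Ioc] <;> omega
  have hdisj : Disjoint (Ioc 0 (j - 1)) (Ioc (j - 1) (m - 1)) := by
    rw [Finset.disjoint_left]; intro a ha hb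
    simp only [Finset.mem_Ioc] at *; omega
  rw [h1, Finset.prod_union hdisj]
  have e1 : ∏ s ∈ Ioc 0 (j - 1), ((x : ℚ) + s + if j ≤ s then 1 else 0)
      = ∏ s ∈ Ioc 0 (j - 1), ((x : ℚ) + s) := by
    refine Finset.prod_congr rfl fun s hs => ?_
    simp only [Finset.mem_Ioc] at hs
    rw [if_neg (by omega)]; ring
  have e2 : ∏ s ∈ Ioc (j - 1) (m - 1), ((x : ℚ) + s + if j ≤ s then 1 else 0)
      = ∏ s ∈ Ioc j m, ((x : ℚ) + s) := by
    have : ∏ s ∈ Ioc (j - 1) (m - 1), ((x : ℚ) + s + if j ≤ s then 1 else 0)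
        = ∏ s ∈ Ioc (j - 1) (m - 1), ((x : ℚ) + (s + 1)) := by
      refine Finset.prod_congr rfl fun s hs => ?_
      simp only [Finset.mem_Ioc] at hs
      rw [if_pos (by omega)]; push_cast; ring
    rw [this]
    have := prod_Ioc_shift (fun t => (x : ℚ) + t) (j - 1) (m - 1) 1
    have hj : j - 1 + 1 = j := by omega
    have hm : m - 1 + 1 = m := by omega
    rw [hj, hm] at this
    rw [← this]
    refine Finset.prod_congr rfl fun s hs => ?_
    push_cast; ring
  rw [e1, e2]
  have habs : (∏ s ∈ Ioc 0 (j - 1), ((x : ℚ) + s)) * ((x : ℚ) + j)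
      = ∏ s ∈ Ioc 0 j, ((x : ℚ) + s) := by
    have : j = (j - 1) + 1 := by omega
    rw [this, Finset.prod_Ioc_succ_top (Nat.zero_le _)]
    congr 2 <;> push_cast <;> omega
  calc (∏ s ∈ Ioc 0 (j - 1), ((x : ℚ) + s)) * (∏ s ∈ Ioc j m, ((x : ℚ) + s)) * ((x : ℚ) + j)
      = (∏ s ∈ Ioc 0 j, ((x : ℚ) + s)) * (∏ s ∈ Ioc j m, ((x : ℚ) + s)) := by
        rw [← habs]; ring
    _ = ∏ s ∈ Ioc 0 m, ((x : ℚ) + s) := Finset.prod_Ioc_consecutive _ (Nat.zero_le _) hjm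
    _ = _ := prod_Ioc_asc x m

lemma prod_fact_zero (m : ℕ) : ∏ s ∈ Ioc 0 m, (s : ℚ) = (m.factorial : ℚ) := by
  have := prod_Ioc_asc 0 m
  simpa using this

lemma sf_shift (m : ℕ) :
    (∏ j ∈ Ioc 0 m, (((j - 1).factorial : ℕ) : ℚ)) * (m.factorial : ℚ)
      = ∏ j ∈ Ioc 0 m, ((j.factorial : ℕ) : ℚ) := by
  induction m with
  | zero => simp
  | succ m ih =>
    rw [Finset.prod_Ioc_succ_top (Nat.zero_le _), Finset.prod_Ioc_succ_top (Nat.zero_le _), ← ih]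
    have : (m + 1 - 1) = m := by omega
    rw [this]

def wfac (ℓ k n₁ nℓ r s : ℕ) : ℚ :=
  (s : ℚ) - (r : ℚ) + 1 + (if r ≤ 1 ∧ 1 ≤ s then (n₁ : ℚ) else 0)
    + (if r ≤ ℓ ∧ ℓ ≤ s then (nℓ : ℚ) else 0) + (if r ≤ k ∧ k ≤ s then 1 else 0)

theorem weyl_dim_formula (ℓ k n₁ nℓ : ℕ) (hℓ : 2 ≤ ℓ) (hk1 : 1 ≤ k) (hkℓ : k ≤ ℓ) :
    (∏ p ∈ (Finset.Icc 1 ℓ ×ˢ Finset.Icc 1 ℓ).filter (fun p => p.1 ≤ p.2),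
        ((p.2 : ℚ) - (p.1 : ℚ) + 1 + ∑ i ∈ Finset.Icc p.1 p.2,
          ((if i = 1 then (n₁ : ℚ) else 0) + (if i = ℓ then (nℓ : ℚ) else 0)
            + (if i = k then 1 else 0))))
      / (∏ r ∈ Finset.Icc 1 ℓ, (Nat.factorial r : ℚ))
    = ((k : ℚ) * ((n₁ : ℚ) + (nℓ : ℚ) + (ℓ : ℚ) + 1))
        / (((n₁ : ℚ) + (k : ℚ)) * ((nℓ : ℚ) + (ℓ : ℚ) + 1 - (k : ℚ)))
      * (Nat.choose (n₁ + ℓ) ℓ : ℚ) * (Nat.choose (nℓ + ℓ) ℓ : ℚ)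
      * (Nat.choose ℓ k : ℚ) := by
  obtain ⟨L, rfl⟩ : ∃ L, ℓ = L + 1 := ⟨ℓ - 1, by omega⟩
  set ℓ := L + 1 with hℓdef
  -- Step 1: rewrite the double product as an iterated product of `wfac`.
  have hstep1 : (∏ p ∈ (Finset.Icc 1 ℓ ×ˢ Finset.Icc 1 ℓ).filter (fun p => p.1 ≤ p.2),
        ((p.2 : ℚ) - (p.1 : ℚ) + 1 + ∑ i ∈ Finset.Icc p.1 p.2,
          ((if i = 1 then (n₁ : ℚ) else 0) + (if i = ℓ then (nℓ : ℚ) else 0)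
            + (if i = k then 1 else 0))))
      = ∏ r ∈ Icc 1 ℓ, ∏ s ∈ Icc r ℓ, wfac ℓ k n₁ nℓ r s := by
    rw [Finset.prod_filter, Finset.prod_product]
    refine Finset.prod_congr rfl fun r hr => ?_
    simp only [Finset.mem_Icc] at hr
    have hfil : Finset.filter (fun s => r ≤ s) (Finset.Icc 1 ℓ) = Finset.Icc r ℓ := by
      ext s; simp only [Finset.mem_filter, Finset.mem_Icc]; omega
    rw [← hfil, Finset.prod_filter]
    refine Finset.prod_congr rfl fun s hs => ?_
    rw [Finset.sum_add_distrib, Finset.sum_add_distrib, Finset.sum_ite_eq',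
      Finset.sum_ite_eq', Finset.sum_ite_eq']
    simp only [Finset.mem_Icc, wfac]
    ring
  rw [hstep1]
  -- Step 2: peel off the first row r = 1.
  have hsplit_outer : ∏ r ∈ Icc 1 ℓ, ∏ s ∈ Icc r ℓ, wfac ℓ k n₁ nℓ r s
      = (∏ s ∈ Icc 1 ℓ, wfac ℓ k n₁ nℓ 1 s)
        * ∏ r ∈ Ioc 1 ℓ, ∏ s ∈ Icc r ℓ, wfac ℓ k n₁ nℓ r s := by
    rw [show Finset.Icc 1 ℓ = Finset.Ioc 0 ℓ from Finset.Icc_add_one_left_eq_Ioc 0 ℓ,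
      ← Finset.prod_Ioc_consecutive _ (Nat.zero_le 1) (by omega : 1 ≤ ℓ)]
    congr 1
    rw [show Finset.Ioc 0 1 = {1} from rfl]
    rw [Finset.prod_singleton, show Finset.Ioc 0 ℓ = Finset.Icc 1 ℓ from (Finset.Icc_add_one_left_eq_Ioc 0 ℓ).symm]
  rw [hsplit_outer]
  -- first row
  have hrow1 : (∏ s ∈ Icc 1 ℓ, wfac ℓ k n₁ nℓ 1 s)
      = (∏ s ∈ Ioc 0 L, ((n₁ : ℚ) + s + if k ≤ s then 1 else 0))
        * ((n₁ : ℚ) + nℓ + ℓ + 1) := by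
    rw [show Finset.Icc 1 ℓ = Finset.Ioc 0 ℓ from Finset.Icc_add_one_left_eq_Ioc 0 ℓ,
      Finset.prod_Ioc_succ_top (Nat.zero_le L)]
    congr 1
    · refine Finset.prod_congr rfl fun s hs => ?_
      simp only [Finset.mem_Ioc] at hs
      simp only [wfac]
      by_cases hks : k ≤ s
      · rw [if_pos (by omega), if_neg (by omega), if_pos (by omega), if_pos hks]; push_cast; ring
      · rw [if_pos (by omega), if_neg (by omega), if_neg (by omega), if_neg hks]; push_cast; ring
    · simp only [wfac]
      rw [if_pos (by omega), if_pos (by omega), if_pos (by omega)]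
      push_cast [hℓdef]; ring
  -- remaining rows
  have hrows : ∀ r ∈ Ioc 1 ℓ, (∏ s ∈ Icc r ℓ, wfac ℓ k n₁ nℓ r s)
      = ((nℓ : ℚ) + (ℓ : ℚ) - r + 1 + if r ≤ k then 1 else 0)
        * ∏ s ∈ Ioc (r - 1) L, ((s : ℚ) - (r : ℚ) + 1 + if r ≤ k ∧ k ≤ s then 1 else 0) := by
    intro r hr
    simp only [Finset.mem_Ioc] at hr
    have hicc : Finset.Icc r ℓ = Finset.Ioc (r - 1) ℓ := by
      ext s; simp only [Finset.mem_Icc, Finset.mem_Ioc]; omega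
    rw [hicc, Finset.prod_Ioc_succ_top (by omega : r - 1 ≤ L), mul_comm]
    congr 1
    · simp only [wfac]
      rw [if_neg (by omega), if_pos (by omega)]
      by_cases hrk : r ≤ k
      · rw [if_pos (by omega), if_pos hrk]; push_cast [hℓdef]; ring
      · rw [if_neg (by omega), if_neg hrk]; push_cast [hℓdef]; ring
    · refine Finset.prod_congr rfl fun s hs => ?_
      simp only [Finset.mem_Ioc] at hs
      simp only [wfac]
      rw [if_neg (by omega), if_neg (by omega)]
      ring
  rw [Finset.prod_congr rfl hrows, Finset.prod_mul_distrib, hrow1]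
  -- column factors with nℓ
  have hC : (∏ r ∈ Ioc 1 ℓ, ((nℓ : ℚ) + (ℓ : ℚ) - r + 1 + if r ≤ k then 1 else 0))
      * ((nℓ : ℚ) + ((ℓ + 1 - k : ℕ) : ℚ))
      = ((nℓ + ℓ).choose ℓ : ℚ) * (ℓ.factorial : ℚ) := by
    have hrefl := prod_Ioc_reflect
      (fun j => (nℓ : ℚ) + j + if ℓ + 1 - k ≤ j then 1 else 0) 1 ℓ ℓ le_rfl
    rw [show ℓ - ℓ = 0 from by omega, show ℓ - 1 = L from by omega] at hrefl
    have hre : ∏ r ∈ Ioc 1 ℓ, ((nℓ : ℚ) + (ℓ : ℚ) - r + 1 + if r ≤ k then 1 else 0)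
        = ∏ j ∈ Ioc 0 L, ((nℓ : ℚ) + j + if ℓ + 1 - k ≤ j then 1 else 0) := by
      rw [← hrefl]
      refine Finset.prod_congr rfl fun r hr => ?_
      simp only [Finset.mem_Ioc] at hr
      have hcast : ((ℓ + 1 - r : ℕ) : ℚ) = (ℓ : ℚ) + 1 - r := by
        rw [Nat.cast_sub (by omega)]; push_cast; ring
      beta_reduce
      by_cases hrk : r ≤ k
      · rw [if_pos hrk, if_pos (by omega), hcast]; ring
      · rw [if_neg hrk, if_neg (by omega), hcast]; ring
    rw [hre]
    have hb := prod_bump nℓ ℓ (ℓ + 1 - k) (by omega) (by omega)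
    rw [show ℓ - 1 = L from by omega] at hb
    exact hb
  -- interior rows, r ≤ k
  have hD1 : ∀ r ∈ Ioc 1 k,
      (∏ s ∈ Ioc (r - 1) L, ((s : ℚ) - (r : ℚ) + 1 + if r ≤ k ∧ k ≤ s then 1 else 0))
        * ((k + 1 - r : ℕ) : ℚ) = (((ℓ + 1 - r).factorial : ℕ) : ℚ) := by
    intro r hr
    simp only [Finset.mem_Ioc] at hr
    have hsh := prod_Ioc_shift
      (fun s => ((s : ℚ) - (r : ℚ) + 1 + if r ≤ k ∧ k ≤ s then 1 else 0)) 0 (ℓ - r) (r - 1)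
    rw [show 0 + (r - 1) = r - 1 from by omega, show ℓ - r + (r - 1) = L from by omega] at hsh
    rw [← hsh]
    have hcong : ∀ t ∈ Ioc 0 (ℓ - r),
        (((t + (r - 1) : ℕ)) : ℚ) - (r : ℚ) + 1 + (if r ≤ k ∧ k ≤ t + (r - 1) then (1:ℚ) else 0)
          = ((0 : ℚ) + t + if k + 1 - r ≤ t then 1 else 0) := by
      intro t ht
      simp only [Finset.mem_Ioc] at ht
      have hcond : (r ≤ k ∧ k ≤ t + (r - 1)) = (k + 1 - r ≤ t) := by
        simp only [eq_iff_iff]; omega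
      have hcast : ((t + (r - 1) : ℕ) : ℚ) = (t : ℚ) + (r : ℚ) - 1 := by
        rw [Nat.cast_add, Nat.cast_sub (by omega)]; push_cast; ring
      simp only [hcond, hcast]; ring
    rw [Finset.prod_congr rfl hcong]
    have hb := prod_bump 0 (ℓ + 1 - r) (k + 1 - r) (by omega) (by omega)
    rw [show ℓ + 1 - r - 1 = ℓ - r from by omega, Nat.zero_add, Nat.choose_self] at hb
    simpa using hb
  -- interior rows, r > k
  have hD2 : ∀ r ∈ Ioc k ℓ,
      (∏ s ∈ Ioc (r - 1) L, ((s : ℚ) - (r : ℚ) + 1 + if r ≤ k ∧ k ≤ s then 1 else 0))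
        = (((ℓ - r).factorial : ℕ) : ℚ) := by
    intro r hr
    simp only [Finset.mem_Ioc] at hr
    have hsh := prod_Ioc_shift
      (fun s => ((s : ℚ) - (r : ℚ) + 1 + if r ≤ k ∧ k ≤ s then 1 else 0)) 0 (ℓ - r) (r - 1)
    rw [show 0 + (r - 1) = r - 1 from by omega, show ℓ - r + (r - 1) = L from by omega] at hsh
    rw [← hsh]
    have hcong : ∀ t ∈ Ioc 0 (ℓ - r),
        (((t + (r - 1) : ℕ)) : ℚ) - (r : ℚ) + 1 + (if r ≤ k ∧ k ≤ t + (r - 1) then (1:ℚ) else 0)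
          = ((t : ℕ) : ℚ) := by
      intro t ht
      simp only [Finset.mem_Ioc] at ht
      have hcond : (r ≤ k ∧ k ≤ t + (r - 1)) = False := by
        simp only [eq_iff_iff, iff_false]; omega
      have hcast : ((t + (r - 1) : ℕ) : ℚ) = (t : ℚ) + (r : ℚ) - 1 := by
        rw [Nat.cast_add, Nat.cast_sub (by omega)]; push_cast; ring
      simp only [hcond, if_false, hcast]; ring
    rw [Finset.prod_congr rfl hcong]
    exact prod_fact_zero (ℓ - r)
  -- first-row bump
  have hB := prod_bump n₁ ℓ k hk1 hkℓ
  rw [show ℓ - 1 = L from by omega] at hB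
  -- nonzero facts
  have hn1k : (n₁ : ℚ) + (k : ℚ) ≠ 0 := by
    have h1 : (1 : ℚ) ≤ (k : ℚ) := by exact_mod_cast hk1
    have h2 : (0 : ℚ) ≤ (n₁ : ℚ) := Nat.cast_nonneg n₁
    intro h; linarith
  have hcne : (nℓ : ℚ) + ((ℓ + 1 - k : ℕ) : ℚ) ≠ 0 := by
    have h1 : (1 : ℚ) ≤ ((ℓ + 1 - k : ℕ) : ℚ) := by
      have : 1 ≤ ℓ + 1 - k := by omega
      exact_mod_cast this
    have h2 : (0 : ℚ) ≤ (nℓ : ℚ) := Nat.cast_nonneg nℓ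
    intro h; linarith
  have hfne : ∀ m : ℕ, ((m.factorial : ℕ) : ℚ) ≠ 0 := fun m =>
    Nat.cast_ne_zero.mpr m.factorial_ne_zero
  have hT1ne : (∏ j ∈ Ioc (ℓ - k) L, ((j.factorial : ℕ) : ℚ)) ≠ 0 :=
    Finset.prod_ne_zero_iff.mpr fun j _ => hfne j
  have hT2ne : (∏ j ∈ Ioc 0 (ℓ - k), (((j - 1).factorial : ℕ) : ℚ)) ≠ 0 :=
    Finset.prod_ne_zero_iff.mpr fun j _ => hfne (j - 1)
  have hCkne : ((ℓ.choose k : ℕ) : ℚ) ≠ 0 :=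
    Nat.cast_ne_zero.mpr (Nat.choose_pos hkℓ).ne'
  have hkne : (k : ℚ) ≠ 0 := by
    intro h; rw [Nat.cast_eq_zero] at h; omega
  -- closed forms
  have e1 : (∏ s ∈ Ioc 0 L, ((n₁ : ℚ) + s + if k ≤ s then 1 else 0))
      = (((n₁ + ℓ).choose ℓ : ℚ) * (ℓ.factorial : ℚ)) / ((n₁ : ℚ) + k) :=
    (eq_div_iff hn1k).mpr hB
  have e2 : (∏ r ∈ Ioc 1 ℓ, ((nℓ : ℚ) + (ℓ : ℚ) - r + 1 + if r ≤ k then 1 else 0))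
      = (((nℓ + ℓ).choose ℓ : ℚ) * (ℓ.factorial : ℚ)) / ((nℓ : ℚ) + ((ℓ + 1 - k : ℕ) : ℚ)) :=
    (eq_div_iff hcne).mpr hC
  -- interior product
  have hK1 : (∏ r ∈ Ioc 1 k, ((k + 1 - r : ℕ) : ℚ)) = (((k - 1).factorial : ℕ) : ℚ) := by
    have h := prod_Ioc_reflect (fun j => (j : ℚ)) 1 k k le_rfl
    rw [show k - k = 0 from by omega] at h
    rw [h]
    exact prod_fact_zero (k - 1)
  have hT1 := prod_Ioc_reflect (fun j => ((j.factorial : ℕ) : ℚ)) 1 k ℓ hkℓ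
  rw [show ℓ - 1 = L from by omega] at hT1
  have hPD1 : (∏ r ∈ Ioc 1 k,
        ∏ s ∈ Ioc (r - 1) L, ((s : ℚ) - (r : ℚ) + 1 + if r ≤ k ∧ k ≤ s then 1 else 0))
      = (∏ j ∈ Ioc (ℓ - k) L, ((j.factorial : ℕ) : ℚ)) / (((k - 1).factorial : ℕ) : ℚ) := by
    rw [eq_div_iff (hfne (k - 1)), ← hK1, ← Finset.prod_mul_distrib, ← hT1]
    exact Finset.prod_congr rfl hD1
  have hT2' := prod_Ioc_reflect (fun j => (((j - 1).factorial : ℕ) : ℚ)) k ℓ ℓ le_rfl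
  rw [show ℓ - ℓ = 0 from by omega] at hT2'
  have hPD2 : (∏ r ∈ Ioc k ℓ,
        ∏ s ∈ Ioc (r - 1) L, ((s : ℚ) - (r : ℚ) + 1 + if r ≤ k ∧ k ≤ s then 1 else 0))
      = ∏ j ∈ Ioc 0 (ℓ - k), (((j - 1).factorial : ℕ) : ℚ) := by
    rw [Finset.prod_congr rfl hD2, ← hT2']
    refine Finset.prod_congr rfl fun r hr => ?_
    simp only [Finset.mem_Ioc] at hr
    beta_reduce
    rw [show ℓ + 1 - r - 1 = ℓ - r from by omega]
  have e3 : (∏ r ∈ Ioc 1 ℓ,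
        ∏ s ∈ Ioc (r - 1) L, ((s : ℚ) - (r : ℚ) + 1 + if r ≤ k ∧ k ≤ s then 1 else 0))
      = (∏ j ∈ Ioc (ℓ - k) L, ((j.factorial : ℕ) : ℚ)) / (((k - 1).factorial : ℕ) : ℚ)
        * ∏ j ∈ Ioc 0 (ℓ - k), (((j - 1).factorial : ℕ) : ℚ) := by
    rw [← Finset.prod_Ioc_consecutive _ (hk1 : 1 ≤ k) hkℓ, hPD1, hPD2]
  -- superfactorial relations
  have e5 : (∏ j ∈ Ioc 0 L, ((j.factorial : ℕ) : ℚ))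
      = (∏ j ∈ Ioc (ℓ - k) L, ((j.factorial : ℕ) : ℚ))
        * ((∏ j ∈ Ioc 0 (ℓ - k), (((j - 1).factorial : ℕ) : ℚ)) * (((ℓ - k).factorial : ℕ) : ℚ)) := by
    rw [sf_shift (ℓ - k), ← Finset.prod_Ioc_consecutive
      (fun j => ((j.factorial : ℕ) : ℚ)) (Nat.zero_le (ℓ - k)) (by omega : ℓ - k ≤ L)]
    ring
  have e4 : (∏ r ∈ Finset.Icc 1 ℓ, (r.factorial : ℚ))
      = (∏ j ∈ Ioc 0 L, ((j.factorial : ℕ) : ℚ)) * (ℓ.factorial : ℚ) := by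
    rw [show Finset.Icc 1 ℓ = Finset.Ioc 0 ℓ from Finset.Icc_add_one_left_eq_Ioc 0 ℓ,
      Finset.prod_Ioc_succ_top (Nat.zero_le L)]
  -- factorial/choose identities
  have hfin : ((ℓ.factorial : ℕ) : ℚ)
      = ((ℓ.choose k : ℕ) : ℚ) * (k : ℚ) * (((k - 1).factorial : ℕ) : ℚ)
        * (((ℓ - k).factorial : ℕ) : ℚ) := by
    have hch := Nat.choose_mul_factorial_mul_factorial hkℓ
    have hkf : k.factorial = k * (k - 1).factorial := by
      conv_lhs => rw [show k = (k - 1) + 1 from by omega]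
      rw [Nat.factorial_succ, show k - 1 + 1 = k from by omega]
    rw [← hch, hkf]
    push_cast
    ring
  have hc : ((ℓ + 1 - k : ℕ) : ℚ) = (ℓ : ℚ) + 1 - (k : ℚ) := by
    rw [Nat.cast_sub (by omega)]; push_cast; ring
  rw [e1, e2, e3, e4, e5, hfin, hc]
  have hK1ne := hfne (k - 1)
  have hFKne := hfne (ℓ - k)
  have hnlk : (nℓ : ℚ) + ((ℓ : ℚ) + 1 - (k : ℚ)) ≠ 0 := by rw [← hc]; exact hcne
  have hnlk' : (nℓ : ℚ) + (ℓ : ℚ) + 1 - (k : ℚ) ≠ 0 := by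
    intro h; exact hnlk (by linarith [h]; )
  field_simp
  ring
end

section
/- With k ∈ {1,…,ℓ}, n₁, n_ℓ ∈ ℕ, N := n₁ − n_ℓ + k, the q-Casimir eigenvalue satisfies the identity 2λ = [n₁+k]·[n₁ − 2N/(ℓ+1) + ℓ+2−k] + [n_ℓ]·[n_ℓ + 2N/(ℓ+1) + ℓ] + [ℓ+1]·[N/(ℓ+1)]², where 2λ := Σ_{i=1}^{ℓ+1} [ (Σ_{j=1}^{i−1} j n_j − Σ_{j=i}^{ℓ} (ℓ+1−j) n_j)/(ℓ+1) + i − (ℓ+2)/2 ]² + 2(ℓ+1 − [ℓ+1])/(q−q^{−1})², with n_i = n₁δ_{i,1} + n_ℓδ_{i,ℓ} + δ_{i,k}. -/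
/-- The q-number `[x] = (q^x - q^(-x))/(q - q⁻¹)` for real `x`. -/
noncomputable def qnR (q x : ℝ) : ℝ := (q ^ x - q ^ (-x)) / (q - q⁻¹)

lemma qnR_sq (q : ℝ) (hq0 : 0 < q) (x : ℝ) :
    qnR q x ^ 2 = (q ^ (2*x) + (q ^ (2*x))⁻¹ - 2) / (q - q⁻¹) ^ 2 := by
  have hx : q ^ (-x) = (q ^ x)⁻¹ := Real.rpow_neg hq0.le x
  have h2 : q ^ (2*x) = q ^ x * q ^ x := by
    rw [two_mul, Real.rpow_add hq0]
  have hpos : (0:ℝ) < q ^ x := Real.rpow_pos_of_pos hq0 x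
  rw [qnR, div_pow, hx, h2]
  congr 1
  field_simp
  ring

lemma qnR_mul (q : ℝ) (hq0 : 0 < q) (x y : ℝ) :
    qnR q x * qnR q y
      = (q ^ (x+y) + (q ^ (x+y))⁻¹ - q ^ (x-y) - (q ^ (x-y))⁻¹) / (q - q⁻¹) ^ 2 := by
  have hx : q ^ (-x) = (q ^ x)⁻¹ := Real.rpow_neg hq0.le x
  have hy : q ^ (-y) = (q ^ y)⁻¹ := Real.rpow_neg hq0.le y
  have hxy : q ^ (x+y) = q ^ x * q ^ y := Real.rpow_add hq0 x y
  have hxy' : q ^ (x-y) = q ^ x / q ^ y := Real.rpow_sub hq0 x y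
  have hxpos : (0:ℝ) < q ^ x := Real.rpow_pos_of_pos hq0 x
  have hypos : (0:ℝ) < q ^ y := Real.rpow_pos_of_pos hq0 y
  rw [qnR, qnR, div_mul_div_comm, hx, hy, hxy, hxy', ← pow_two]
  congr 1
  field_simp
  ring

lemma mid_sum (q : ℝ) (hq0 : 0 < q) (hq1 : q < 1) (c : ℝ) (a b : ℕ) (hab : a ≤ b) :
    ∑ i ∈ Finset.Ioc a b, qnR q (c + i) ^ 2
      = (q ^ (2*c) * ((q^2)^(b+1) - (q^2)^(a+1)) / (q^2 - 1)
        + (q ^ (2*c))⁻¹ * ((((q^2)^(b+1))⁻¹ - ((q^2)^(a+1))⁻¹)) / ((q^2)⁻¹ - 1)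
        - 2 * ((b:ℝ) - (a:ℝ))) / (q - q⁻¹) ^ 2 := by
  have hq2 : (q:ℝ)^2 < 1 := by nlinarith
  have hq2ne : (q:ℝ)^2 ≠ 1 := ne_of_lt hq2
  have hq2pos : (0:ℝ) < q^2 := by positivity
  have hq2ine : ((q:ℝ)^2)⁻¹ ≠ 1 := by
    intro h
    have : (q:ℝ)^2 = 1 := by
      field_simp at h
      linarith
    exact hq2ne this
  have hstep : ∀ i : ℕ, qnR q (c + i) ^ 2
      = (q ^ (2*c) * (q^2)^i + (q ^ (2*c))⁻¹ * ((q^2)^i)⁻¹ - 2) / (q - q⁻¹) ^ 2 := by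
    intro i
    rw [qnR_sq q hq0]
    congr 1
    have hi : q ^ (2*(i:ℝ)) = (q^2)^i := by
      rw [show (2:ℝ)*(i:ℝ) = ((2*i : ℕ):ℝ) by push_cast; ring, Real.rpow_natCast, pow_mul]
    have hsplit : q ^ (2*(c + (i:ℝ))) = q ^ (2*c) * q ^ (2*(i:ℝ)) := by
      rw [show (2:ℝ)*(c+(i:ℝ)) = 2*c + 2*(i:ℝ) by ring, Real.rpow_add hq0]
    rw [hsplit, hi, mul_inv]
  rw [Finset.sum_congr rfl (fun i _ => hstep i)]
  rw [← Finset.sum_div]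
  congr 1
  rw [Finset.sum_sub_distrib, Finset.sum_add_distrib, ← Finset.mul_sum, ← Finset.mul_sum,
    Finset.sum_const, Nat.card_Ioc]
  have hIoc : Finset.Ioc a b = Finset.Ico (a+1) (b+1) := by
    rw [Finset.Ico_add_one_add_one_eq_Ioc]
  have hg1 : ∑ i ∈ Finset.Ioc a b, (q^2)^i = ((q^2)^(b+1) - (q^2)^(a+1)) / (q^2 - 1) := by
    rw [hIoc, geom_sum_Ico hq2ne (by omega)]
  have hg2 : ∑ i ∈ Finset.Ioc a b, ((q^2)^i)⁻¹
      = (((q^2)^(b+1))⁻¹ - ((q^2)^(a+1))⁻¹) / ((q^2)⁻¹ - 1) := by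
    have : ∀ i : ℕ, ((q^2)^i)⁻¹ = ((q^2)⁻¹)^i := fun i => by rw [inv_pow]
    simp_rw [this]
    rw [hIoc, geom_sum_Ico hq2ine (by omega), inv_pow, inv_pow]
  rw [hg1, hg2, nsmul_eq_mul, Nat.cast_sub hab]
  ring

set_option maxHeartbeats 2000000 in
theorem casimir_eigenvalue_identity (q : ℝ) (hq0 : 0 < q) (hq1 : q < 1)
    (ℓ k n₁ nℓ : ℕ) (hℓ : 2 ≤ ℓ) (hk1 : 1 ≤ k) (hkℓ : k ≤ ℓ) :
    -- weight components n_i = n₁ δ_{i,1} + nℓ δ_{i,ℓ} + δ_{i,k}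
    (fun (nn : ℕ → ℝ) (N : ℝ) =>
      (∑ i ∈ Finset.Icc 1 (ℓ + 1),
          qnR q (((∑ j ∈ Finset.Icc 1 (i - 1), (j : ℝ) * nn j)
              - ∑ j ∈ Finset.Icc i ℓ, ((ℓ : ℝ) + 1 - (j : ℝ)) * nn j) / ((ℓ : ℝ) + 1)
              + (i : ℝ) - ((ℓ : ℝ) + 2) / 2) ^ 2)
        + 2 * ((ℓ : ℝ) + 1 - qnR q ((ℓ : ℝ) + 1)) / (q - q⁻¹) ^ 2
      = qnR q ((n₁ : ℝ) + (k : ℝ))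
          * qnR q ((n₁ : ℝ) - 2 * N / ((ℓ : ℝ) + 1) + (ℓ : ℝ) + 2 - (k : ℝ))
        + qnR q (nℓ : ℝ) * qnR q ((nℓ : ℝ) + 2 * N / ((ℓ : ℝ) + 1) + (ℓ : ℝ))
        + qnR q ((ℓ : ℝ) + 1) * qnR q (N / ((ℓ : ℝ) + 1)) ^ 2)
      (fun i => (if i = 1 then (n₁ : ℝ) else 0) + (if i = ℓ then (nℓ : ℝ) else 0)
        + (if i = k then 1 else 0))
      ((n₁ : ℝ) - (nℓ : ℝ) + (k : ℝ)) := by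
  beta_reduce
  -- the "m" atom
  set m : ℝ := ((n₁:ℝ) - (nℓ:ℝ) + (k:ℝ)) / ((ℓ:ℝ) + 1) with hm
  have h01 : Finset.Icc 1 (ℓ+1) = Finset.Ioc 0 (ℓ+1) := Finset.Icc_add_one_left_eq_Ioc 0 (ℓ+1)
  rw [h01,
    ← Finset.sum_Ioc_consecutive _ (show (0:ℕ) ≤ ℓ by omega) (show ℓ ≤ ℓ+1 by omega),
    ← Finset.sum_Ioc_consecutive _ (show (0:ℕ) ≤ k by omega) (show k ≤ ℓ by omega),
    ← Finset.sum_Ioc_consecutive _ (show (0:ℕ) ≤ 1 by omega) (show 1 ≤ k by omega)]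
  -- singleton at i = 1
  have hs1 : ∑ i ∈ Finset.Ioc (0:ℕ) 1,
      qnR q (((∑ j ∈ Finset.Icc 1 (i - 1), (j : ℝ) * ((if j = 1 then (n₁ : ℝ) else 0)
            + (if j = ℓ then (nℓ : ℝ) else 0) + (if j = k then 1 else 0)))
          - ∑ j ∈ Finset.Icc i ℓ, ((ℓ : ℝ) + 1 - (j : ℝ)) * ((if j = 1 then (n₁ : ℝ) else 0)
            + (if j = ℓ then (nℓ : ℝ) else 0) + (if j = k then 1 else 0))) / ((ℓ : ℝ) + 1)
          + (i : ℝ) - ((ℓ : ℝ) + 2) / 2) ^ 2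
      = qnR q (m - (n₁:ℝ) - ((ℓ:ℝ) + 2) / 2) ^ 2 := by
    rw [Nat.Ioc_succ_singleton, Finset.sum_singleton]
    congr 2
    simp only [mul_add, mul_ite, mul_zero, mul_one, Finset.sum_add_distrib,
      Finset.sum_ite_eq', Finset.mem_Icc]
    norm_num
    simp only [show ℓ ≠ 0 from by omega, show k ≠ 0 from by omega, hk1, hkℓ,
      if_false, ite_false, true_and, and_true, if_true, and_false,
      show (1:ℕ) ≤ ℓ from by omega, le_refl]
    rw [hm]
    field_simp
    ring
  -- singleton at i = ℓ + 1
  have hs2 : ∑ i ∈ Finset.Ioc ℓ (ℓ+1),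
      qnR q (((∑ j ∈ Finset.Icc 1 (i - 1), (j : ℝ) * ((if j = 1 then (n₁ : ℝ) else 0)
            + (if j = ℓ then (nℓ : ℝ) else 0) + (if j = k then 1 else 0)))
          - ∑ j ∈ Finset.Icc i ℓ, ((ℓ : ℝ) + 1 - (j : ℝ)) * ((if j = 1 then (n₁ : ℝ) else 0)
            + (if j = ℓ then (nℓ : ℝ) else 0) + (if j = k then 1 else 0))) / ((ℓ : ℝ) + 1)
          + (i : ℝ) - ((ℓ : ℝ) + 2) / 2) ^ 2
      = qnR q (m + (nℓ:ℝ) + (ℓ:ℝ) / 2) ^ 2 := by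
    rw [Nat.Ioc_succ_singleton, Finset.sum_singleton]
    congr 2
    simp only [mul_add, mul_ite, mul_zero, mul_one, Finset.sum_add_distrib,
      Finset.sum_ite_eq', Finset.mem_Icc]
    simp only [Nat.add_sub_cancel, show (1:ℕ) ≤ ℓ from by omega, le_refl, hk1, hkℓ,
      true_and, and_true, if_true, show ¬ ℓ + 1 ≤ 1 from by omega,
      show ¬ ℓ + 1 ≤ ℓ from by omega, show ¬ ℓ + 1 ≤ k from by omega, if_false, ite_false]
    rw [hm]
    push_cast
    field_simp
    ring
  -- middle sum over Ioc 1 k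
  have hc1 : ∑ i ∈ Finset.Ioc (1:ℕ) k,
      qnR q (((∑ j ∈ Finset.Icc 1 (i - 1), (j : ℝ) * ((if j = 1 then (n₁ : ℝ) else 0)
            + (if j = ℓ then (nℓ : ℝ) else 0) + (if j = k then 1 else 0)))
          - ∑ j ∈ Finset.Icc i ℓ, ((ℓ : ℝ) + 1 - (j : ℝ)) * ((if j = 1 then (n₁ : ℝ) else 0)
            + (if j = ℓ then (nℓ : ℝ) else 0) + (if j = k then 1 else 0))) / ((ℓ : ℝ) + 1)
          + (i : ℝ) - ((ℓ : ℝ) + 2) / 2) ^ 2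
      = ∑ i ∈ Finset.Ioc (1:ℕ) k, qnR q ((m - 1 - ((ℓ:ℝ) + 2) / 2) + (i:ℝ)) ^ 2 := by
    refine Finset.sum_congr rfl fun i hi => ?_
    rw [Finset.mem_Ioc] at hi
    congr 2
    simp only [mul_add, mul_ite, mul_zero, mul_one, Finset.sum_add_distrib,
      Finset.sum_ite_eq', Finset.mem_Icc]
    simp only [show (1:ℕ) ≤ i - 1 from by omega, show ¬ ℓ ≤ i - 1 from by omega,
      show ¬ k ≤ i - 1 from by omega, show ¬ i ≤ 1 from by omega,
      show i ≤ ℓ from by omega, show i ≤ k from by omega, hk1, hkℓ, le_refl,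
      true_and, and_true, if_true, if_false, ite_false, and_false, false_and]
    rw [hm]
    push_cast
    field_simp
    ring
  -- middle sum over Ioc k ℓ
  have hc2 : ∑ i ∈ Finset.Ioc k ℓ,
      qnR q (((∑ j ∈ Finset.Icc 1 (i - 1), (j : ℝ) * ((if j = 1 then (n₁ : ℝ) else 0)
            + (if j = ℓ then (nℓ : ℝ) else 0) + (if j = k then 1 else 0)))
          - ∑ j ∈ Finset.Icc i ℓ, ((ℓ : ℝ) + 1 - (j : ℝ)) * ((if j = 1 then (n₁ : ℝ) else 0)
            + (if j = ℓ then (nℓ : ℝ) else 0) + (if j = k then 1 else 0))) / ((ℓ : ℝ) + 1)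
          + (i : ℝ) - ((ℓ : ℝ) + 2) / 2) ^ 2
      = ∑ i ∈ Finset.Ioc k ℓ, qnR q ((m - ((ℓ:ℝ) + 2) / 2) + (i:ℝ)) ^ 2 := by
    refine Finset.sum_congr rfl fun i hi => ?_
    rw [Finset.mem_Ioc] at hi
    congr 2
    simp only [mul_add, mul_ite, mul_zero, mul_one, Finset.sum_add_distrib,
      Finset.sum_ite_eq', Finset.mem_Icc]
    simp only [show (1:ℕ) ≤ i - 1 from by omega, show ¬ ℓ ≤ i - 1 from by omega,
      show k ≤ i - 1 from by omega, show ¬ i ≤ 1 from by omega,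
      show i ≤ ℓ from by omega, show ¬ i ≤ k from by omega, hk1, hkℓ, le_refl,
      true_and, and_true, if_true, if_false, ite_false, and_false, false_and]
    rw [hm]
    push_cast
    field_simp
    ring
  rw [hs1, hs2, hc1, hc2, mid_sum q hq0 hq1 _ 1 k hk1, mid_sum q hq0 hq1 _ k ℓ hkℓ]
  rw [qnR_sq q hq0 (m - (n₁:ℝ) - ((ℓ:ℝ) + 2) / 2), qnR_sq q hq0 (m + (nℓ:ℝ) + (ℓ:ℝ) / 2),
    qnR_sq q hq0 m,
    qnR_mul q hq0 ((n₁:ℝ) + (k:ℝ)) ((n₁:ℝ) - 2 * ((n₁:ℝ) - (nℓ:ℝ) + (k:ℝ)) / ((ℓ:ℝ) + 1) + (ℓ:ℝ) + 2 - (k:ℝ)),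
    qnR_mul q hq0 (nℓ:ℝ) ((nℓ:ℝ) + 2 * ((n₁:ℝ) - (nℓ:ℝ) + (k:ℝ)) / ((ℓ:ℝ) + 1) + (ℓ:ℝ))]
  simp only [qnR]
  rw [show 2 * (m - (n₁:ℝ) - ((ℓ:ℝ) + 2) / 2) = (m + m) - ((n₁:ℝ) + (n₁:ℝ) + (ℓ:ℝ) + 1 + 1) from by ring,
    show 2 * (m - 1 - ((ℓ:ℝ) + 2) / 2) = (m + m) - ((ℓ:ℝ) + 1 + 1 + 1 + 1) from by ring,
    show 2 * (m - ((ℓ:ℝ) + 2) / 2) = (m + m) - ((ℓ:ℝ) + 1 + 1) from by ring,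
    show 2 * (m + (nℓ:ℝ) + (ℓ:ℝ) / 2) = m + m + ((nℓ:ℝ) + (nℓ:ℝ)) + (ℓ:ℝ) from by ring,
    show (n₁:ℝ) + (k:ℝ) + ((n₁:ℝ) - 2 * ((n₁:ℝ) - (nℓ:ℝ) + (k:ℝ)) / ((ℓ:ℝ) + 1) + (ℓ:ℝ) + 2 - (k:ℝ))
      = ((n₁:ℝ) + (n₁:ℝ) + (ℓ:ℝ) + 1 + 1) - (m + m) from by rw [hm]; ring,
    show (n₁:ℝ) + (k:ℝ) - ((n₁:ℝ) - 2 * ((n₁:ℝ) - (nℓ:ℝ) + (k:ℝ)) / ((ℓ:ℝ) + 1) + (ℓ:ℝ) + 2 - (k:ℝ))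
      = ((k:ℝ) + (k:ℝ) + (m + m)) - ((ℓ:ℝ) + 1 + 1) from by rw [hm]; ring,
    show (nℓ:ℝ) + ((nℓ:ℝ) + 2 * ((n₁:ℝ) - (nℓ:ℝ) + (k:ℝ)) / ((ℓ:ℝ) + 1) + (ℓ:ℝ))
      = (nℓ:ℝ) + (nℓ:ℝ) + (m + m) + (ℓ:ℝ) from by rw [hm]; ring,
    show (nℓ:ℝ) - ((nℓ:ℝ) + 2 * ((n₁:ℝ) - (nℓ:ℝ) + (k:ℝ)) / ((ℓ:ℝ) + 1) + (ℓ:ℝ))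
      = -(m + m + (ℓ:ℝ)) from by rw [hm]; ring,
    show (2:ℝ) * m = m + m from by ring]
  have hKp : ((q:ℝ)^2)^(k+1) = (q ^ ((k:ℝ)))^2 * q^2 := by
    rw [Real.rpow_natCast]; ring
  have hLp : ((q:ℝ)^2)^(ℓ+1) = (q ^ ((ℓ:ℝ)))^2 * q^2 := by
    rw [Real.rpow_natCast]; ring
  rw [hKp, hLp]
  simp only [Real.rpow_sub hq0, Real.rpow_add hq0, Real.rpow_neg hq0.le, Real.rpow_one]
  have hqne : q ≠ 0 := ne_of_gt hq0
  have hq2lt : (q:ℝ)^2 < 1 := by nlinarith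
  have hq2ne : (q:ℝ)^2 - 1 ≠ 0 := by nlinarith
  have hq2ine : ((q:ℝ)^2)⁻¹ - 1 ≠ 0 := by
    have h2 : (0:ℝ) < q^2 := by positivity
    have : 1 < ((q:ℝ)^2)⁻¹ := by
      rw [lt_inv_comm₀] <;> nlinarith
    nlinarith
  have htne : q - q⁻¹ ≠ 0 := by
    intro h
    have : q * q - 1 = 0 := by
      have := sub_eq_zero.mp h
      field_simp at this
      nlinarith [this]
    nlinarith [this]
  have hMne : q ^ m ≠ 0 := ne_of_gt (Real.rpow_pos_of_pos hq0 m)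
  have hAne : q ^ ((n₁:ℝ)) ≠ 0 := ne_of_gt (Real.rpow_pos_of_pos hq0 _)
  have hBne : q ^ ((nℓ:ℝ)) ≠ 0 := ne_of_gt (Real.rpow_pos_of_pos hq0 _)
  have hKne : q ^ ((k:ℝ)) ≠ 0 := ne_of_gt (Real.rpow_pos_of_pos hq0 _)
  have hLne : q ^ ((ℓ:ℝ)) ≠ 0 := ne_of_gt (Real.rpow_pos_of_pos hq0 _)
  simp only [Nat.cast_one]
  have hMpos : (0:ℝ) < q ^ m := Real.rpow_pos_of_pos hq0 m
  have hApos : (0:ℝ) < q ^ ((n₁:ℝ)) := Real.rpow_pos_of_pos hq0 _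
  have hBpos : (0:ℝ) < q ^ ((nℓ:ℝ)) := Real.rpow_pos_of_pos hq0 _
  have hKpos : (0:ℝ) < q ^ ((k:ℝ)) := Real.rpow_pos_of_pos hq0 _
  have hLpos : (0:ℝ) < q ^ ((ℓ:ℝ)) := Real.rpow_pos_of_pos hq0 _
  generalize hMg : q ^ m = M at hMpos ⊢
  generalize hAg : q ^ ((n₁:ℝ)) = A at hApos ⊢
  generalize hBg : q ^ ((nℓ:ℝ)) = B at hBpos ⊢
  generalize hKg : q ^ ((k:ℝ)) = K at hKpos ⊢
  generalize hLg : q ^ ((ℓ:ℝ)) = L at hLpos ⊢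
  have hMne' : M ≠ 0 := ne_of_gt hMpos
  have hAne' : A ≠ 0 := ne_of_gt hApos
  have hBne' : B ≠ 0 := ne_of_gt hBpos
  have hKne' : K ≠ 0 := ne_of_gt hKpos
  have hLne' : L ≠ 0 := ne_of_gt hLpos
  have h1mq2 : (1:ℝ) - q^2 ≠ 0 := by nlinarith
  rw [show ((q:ℝ)^2)⁻¹ - 1 = (1-q^2)/q^2 from by field_simp; try ring,
      show q - q⁻¹ = (q^2-1)/q from by field_simp; try ring]
  field_simp [hMne', hAne', hBne', hKne', hLne', hqne, hq2ne, h1mq2]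
  ring
end
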